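/- arXiv:2104.12978 — 7 statements merged into one kernel-verified Lean document; each statement's English description precedes it below -/
import Mathlib

section
/- An edge-colored finite connected simple graph G on n vertices has a rainbow spanning tree if and only if for every 2 ≤ k ≤ n and every partition of V(G) into k nonempty parts, at least k-1 different colors appear on the edges between partition classes. -/
open Finset
open scoped Classical

/-- The set of non-crossing edges of `G` with respect to a partition `P` of the
vertex set: edges whose two endpoints lie in the same part of `P`. -/
noncomputable def edgesNonCrossing {V : Type} [Fintype V] (G : SimpleGraph V)
    (P : Finpartition (Finset.univ : Finset V)) : Finset (Sym2 V) :=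
  G.edgeFinset.filter (fun e => ∃ p ∈ P.parts, ∀ v ∈ e, v ∈ p)

/-- The set of crossing edges of `G` with respect to a partition `P` of the
vertex set: edges whose endpoints lie in different parts of `P`. -/
noncomputable def edgesCrossing {V : Type} [Fintype V] (G : SimpleGraph V)
    (P : Finpartition (Finset.univ : Finset V)) : Finset (Sym2 V) :=
  G.edgeFinset.filter (fun e => ¬ ∃ p ∈ P.parts, ∀ v ∈ e, v ∈ p)

/-- `G`, edge-colored by `c`, contains `t` pairwise edge-disjoint rainbow
spanning trees. -/
def HasRainbowSpanningTrees {V : Type} [Fintype V] (G : SimpleGraph V)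
    (c : Sym2 V → ℕ) (t : ℕ) : Prop :=
  ∃ T : Fin t → SimpleGraph V,
    (∀ i, T i ≤ G) ∧ (∀ i, (T i).IsTree) ∧
    (∀ i, Set.InjOn c ((T i).edgeSet)) ∧
    (∀ i j, i ≠ j → Disjoint ((T i).edgeSet) ((T j).edgeSet))

/-- The anti-Ramsey number `r(G,t)`: the maximum number of colors in an
edge-coloring of `G` containing no `t` pairwise edge-disjoint rainbow spanning
trees. -/
noncomputable def antiRamsey {V : Type} [Fintype V] (G : SimpleGraph V) (t : ℕ) : ℕ :=
  sSup {m | ∃ c : Sym2 V → ℕ, (G.edgeFinset.image c).card = m ∧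
    ¬ HasRainbowSpanningTrees G c t}

/-- `max_{P : |P| ≥ 3} { |E(P,G)| + t(|P|-2) }`. -/
noncomputable def maxNonCross3 {V : Type} [Fintype V] (G : SimpleGraph V) (t : ℕ) : ℕ :=
  sSup {m | ∃ P : Finpartition (Finset.univ : Finset V), 3 ≤ P.parts.card ∧
    m = (edgesNonCrossing G P).card + t * (P.parts.card - 2)}

/-- `f_G(s)`: the maximum of `|E(P,G)|` over partitions of the vertex set into
exactly `s` parts. -/
noncomputable def fMax {V : Type} [Fintype V] (G : SimpleGraph V) (s : ℕ) : ℕ :=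
  sSup {m | ∃ P : Finpartition (Finset.univ : Finset V), P.parts.card = s ∧
    m = (edgesNonCrossing G P).card}

/-- The number of edges of `G` induced by a set `p` of vertices. -/
noncomputable def edgesWithin {V : Type} [Fintype V] (G : SimpleGraph V) (p : Finset V) : ℕ :=
  (G.edgeFinset.filter (fun e => ∀ v ∈ e, v ∈ p)).card

/-- One splitting step: remove a single vertex from a currently largest part
(measured by the number of non-crossing edges it induces) to form a new
singleton part. -/
def SplitStep {V : Type} [Fintype V] (G : SimpleGraph V)
    (P Q : Finpartition (Finset.univ : Finset V)) : Prop :=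
  ∃ p ∈ P.parts, (∀ q ∈ P.parts, edgesWithin G q ≤ edgesWithin G p) ∧
    ∃ v ∈ p, p.erase v ≠ ∅ ∧
      Q.parts = insert {v} (insert (p.erase v) (P.parts.erase p))

set_option linter.unusedSectionVars false
set_option maxHeartbeats 1600000

section RainbowAuxSection
open SimpleGraph

namespace RainbowAux

variable {α : Type} [Fintype α]




noncomputable def root (H : SimpleGraph α) (v : α) : α := (H.connectedComponentMk v).out

lemma reachable_root (H : SimpleGraph α) (v : α) : H.Reachable v (root H v) := by
  have h : H.connectedComponentMk (root H v) = H.connectedComponentMk v :=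
    (H.connectedComponentMk v).out_eq
  exact (SimpleGraph.ConnectedComponent.exact h).symm

lemma root_eq_of_reachable {H : SimpleGraph α} {v w : α} (h : H.Reachable v w) :
    root H v = root H w := by
  unfold root
  rw [SimpleGraph.ConnectedComponent.sound h]

lemma root_out (H : SimpleGraph α) (C : H.ConnectedComponent) : root H C.out = C.out :=
  congrArg Quot.out C.out_eq

lemma cons_path_of_shortest {H : SimpleGraph α} {x w r : α} (hadj : H.Adj w x)
    (p : H.Walk x r) (hp : p.IsPath) (hlen : p.length = H.dist x r)
    (hlt : H.dist x r < H.dist w r) : (Walk.cons hadj p).IsPath := by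
  rw [Walk.cons_isPath_iff]
  refine ⟨hp, fun hw => ?_⟩
  have hd : H.dist w r ≤ (p.dropUntil w hw).length := SimpleGraph.dist_le _
  have hsum := congrArg Walk.length (p.take_spec hw)
  rw [Walk.length_append] at hsum
  omega

lemma parent_unique {H : SimpleGraph α} (hac : H.IsAcyclic) {w x y r : α}
    (hx : H.Adj w x) (hy : H.Adj w y)
    (hdx : H.dist x r < H.dist w r) (hdy : H.dist y r < H.dist w r)
    (hrx : H.Reachable x r) (hry : H.Reachable y r) : x = y := by
  obtain ⟨p, hp, hpl⟩ := hrx.exists_path_of_dist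
  obtain ⟨q, hq, hql⟩ := hry.exists_path_of_dist
  have hP : (Walk.cons hx p).IsPath := cons_path_of_shortest hx p hp hpl hdx
  have hQ : (Walk.cons hy q).IsPath := cons_path_of_shortest hy q hq hql hdy
  have hpq := hac.path_unique ⟨Walk.cons hx p, hP⟩ ⟨Walk.cons hy q, hQ⟩
  have hsup := congrArg (fun P : H.Path w r => P.1.support) hpq
  simp only [Walk.support_cons] at hsup
  have h2 : p.support = q.support := by injection hsup
  have h3 : x :: p.support.tail = y :: q.support.tail := by
    rw [← Walk.support_eq_cons, ← Walk.support_eq_cons]; exact h2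
  injection h3

lemma dist_ne_of_adj_acyclic {H : SimpleGraph α} (hac : H.IsAcyclic) {u v r : α}
    (hadj : H.Adj u v) (hur : H.Reachable u r) : H.dist u r ≠ H.dist v r := by
  intro heq
  have hvr : H.Reachable v r := hadj.symm.reachable.trans hur
  obtain ⟨p, hp, hpl⟩ := hur.exists_path_of_dist
  obtain ⟨q, hq, hql⟩ := hvr.exists_path_of_dist
  have hP : (Walk.cons hadj.symm p).IsPath := by
    rw [Walk.cons_isPath_iff]
    refine ⟨hp, fun hv => ?_⟩
    have hd : H.dist v r ≤ (p.dropUntil v hv).length := SimpleGraph.dist_le _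
    have hsum := congrArg Walk.length (p.take_spec hv)
    rw [Walk.length_append] at hsum
    have htu : (p.takeUntil v hv).length ≠ 0 := fun h0 => hadj.ne (Walk.eq_of_length_eq_zero h0)
    omega
  have hpq := hac.path_unique ⟨Walk.cons hadj.symm p, hP⟩ ⟨q, hq⟩
  have hlen := congrArg (fun P : H.Path v r => P.1.length) hpq
  simp only [Walk.length_cons] at hlen
  omega

lemma edge_add_comp_le_card {H : SimpleGraph α} (hac : H.IsAcyclic) :
    H.edgeFinset.card + Nat.card H.ConnectedComponent ≤ Fintype.card α := by
  classical
  have hadj : ∀ e : ↥H.edgeFinset, H.Adj e.1.out.1 e.1.out.2 := by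
    rintro ⟨e, he⟩
    have h1 : e ∈ H.edgeSet := SimpleGraph.mem_edgeFinset.mp he
    have h2 : Sym2.mk e.out.1 e.out.2 = e := e.out_eq
    rw [← h2] at h1
    exact H.mem_edgeSet.mp h1
  let far : ↥H.edgeFinset → α := fun e =>
    if H.dist e.1.out.1 (root H e.1.out.1) < H.dist e.1.out.2 (root H e.1.out.1)
    then e.1.out.2 else e.1.out.1
  have far_spec : ∀ e : ↥H.edgeFinset, ∃ x, H.Adj (far e) x ∧ e.1 = s(far e, x) ∧
      H.dist x (root H (far e)) < H.dist (far e) (root H (far e)) := by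
    intro e
    have hne := dist_ne_of_adj_acyclic hac (hadj e) (reachable_root H e.1.out.1)
    have hout : e.1 = s(e.1.out.1, e.1.out.2) := e.1.out_eq.symm
    by_cases hlt : H.dist e.1.out.1 (root H e.1.out.1) < H.dist e.1.out.2 (root H e.1.out.1)
    · refine ⟨e.1.out.1, ?_, ?_, ?_⟩
      · show H.Adj (far e) _
        rw [show far e = e.1.out.2 from if_pos hlt]
        exact (hadj e).symm
      · rw [show far e = e.1.out.2 from if_pos hlt, Sym2.eq_swap]
        exact hout
      · rw [show far e = e.1.out.2 from if_pos hlt,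
          root_eq_of_reachable (hadj e).symm.reachable]
        exact hlt
    · refine ⟨e.1.out.2, ?_, ?_, ?_⟩
      · rw [show far e = e.1.out.1 from if_neg hlt]
        exact hadj e
      · rw [show far e = e.1.out.1 from if_neg hlt]
        exact hout
      · rw [show far e = e.1.out.1 from if_neg hlt]
        omega
  let Gmap : (↥H.edgeFinset ⊕ H.ConnectedComponent) → α := Sum.elim far (fun C => C.out)
  have hinj : Function.Injective Gmap := by
    rintro (e | C) (e' | C') h
    · simp only [Gmap, Sum.elim_inl] at h
      obtain ⟨x, hx, hex, hdx⟩ := far_spec e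
      obtain ⟨y, hy, hey, hdy⟩ := far_spec e'
      rw [h] at hx hex hdx
      have hxy : x = y := by
        refine parent_unique hac hx hy hdx hdy ?_ ?_
        · exact hx.symm.reachable.trans (reachable_root H (far e'))
        · exact hy.symm.reachable.trans (reachable_root H (far e'))
      congr 1
      exact Subtype.ext (by rw [hex, hey, hxy])
    · simp only [Gmap, Sum.elim_inl, Sum.elim_inr] at h
      obtain ⟨x, hx, hex, hdx⟩ := far_spec e
      rw [h, root_out, SimpleGraph.dist_self] at hdx
      omega
    · simp only [Gmap, Sum.elim_inl, Sum.elim_inr] at h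
      obtain ⟨x, hx, hex, hdx⟩ := far_spec e'
      rw [← h, root_out, SimpleGraph.dist_self] at hdx
      omega
    · simp only [Gmap, Sum.elim_inr] at h
      congr 1
      rw [← C.out_eq, ← C'.out_eq, h]
  have hle := Nat.card_le_card_of_injective Gmap hinj
  have hs : Nat.card (↥H.edgeFinset ⊕ H.ConnectedComponent)
      = H.edgeFinset.card + Nat.card H.ConnectedComponent := by
    rw [Nat.card_sum, Nat.card_eq_finsetCard]
  rw [hs] at hle
  have hn : Nat.card α = Fintype.card α := Nat.card_eq_fintype_card
  omega

lemma comp_card_connected {H : SimpleGraph α} (hc : H.Connected) :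
    Nat.card H.ConnectedComponent = 1 := by
  rw [Nat.card_eq_one_iff_unique]
  have : Nonempty α := hc.nonempty
  exact ⟨hc.preconnected.subsingleton_connectedComponent,
    ⟨H.connectedComponentMk (Classical.arbitrary α)⟩⟩

lemma exists_parent (H : SimpleGraph α) {v : α} (h : v ≠ root H v) :
    ∃ u, H.Adj v u ∧ H.dist u (root H v) + 1 = H.dist v (root H v) := by
  obtain ⟨p, hp, hl⟩ := (reachable_root H v).exists_path_of_dist
  obtain ⟨u, hadj, q, rfl⟩ := SimpleGraph.Walk.exists_eq_cons_of_ne h p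
  refine ⟨u, hadj, ?_⟩
  have h1 : H.dist u (root H v) ≤ q.length := SimpleGraph.dist_le q
  have hru : H.Reachable u (root H v) := q.reachable
  obtain ⟨q', hq'⟩ := hru.exists_walk_length_eq_dist
  have h2 : H.dist v (root H v) ≤ q'.length + 1 := by
    simpa using SimpleGraph.dist_le (SimpleGraph.Walk.cons hadj q')
  simp only [SimpleGraph.Walk.length_cons] at hl
  omega

lemma card_le_edge_add_comp (H : SimpleGraph α) :
    Fintype.card α ≤ H.edgeFinset.card + Nat.card H.ConnectedComponent := by
  classical
  have key : ∀ v : α, v ≠ root H v →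
      {u // H.Adj v u ∧ H.dist u (root H v) + 1 = H.dist v (root H v)} :=
    fun v h => Classical.indefiniteDescription _ (exists_parent H h)
  let F : α → (↥H.edgeFinset ⊕ H.ConnectedComponent) := fun v =>
    if h : v = root H v then Sum.inr (H.connectedComponentMk v)
    else Sum.inl ⟨s(v, (key v h).1), SimpleGraph.mem_edgeFinset.mpr
      (H.mem_edgeSet.mpr (key v h).2.1)⟩
  have hinj : Function.Injective F := by
    intro a b hab
    simp only [F] at hab
    by_cases ha : a = root H a <;> by_cases hb : b = root H b
    · rw [dif_pos ha, dif_pos hb] at hab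
      simp only [Sum.inr.injEq] at hab
      have := SimpleGraph.ConnectedComponent.exact hab
      rw [ha, hb, root_eq_of_reachable this]
    · rw [dif_pos ha, dif_neg hb] at hab; simp at hab
    · rw [dif_neg ha, dif_pos hb] at hab; simp at hab
    · rw [dif_neg ha, dif_neg hb] at hab
      simp only [Sum.inl.injEq, Subtype.mk.injEq] at hab
      rw [Sym2.eq_iff] at hab
      rcases hab with ⟨h1, _⟩ | ⟨h1, h2⟩
      · exact h1
      · by_contra _
        have hadj : H.Adj a (key a ha).1 := (key a ha).2.1
        have hreach : H.Reachable a b := by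
          rw [h2] at hadj; exact hadj.reachable
        have hroot : root H a = root H b := root_eq_of_reachable hreach
        have e1 := (key a ha).2.2
        have e2 := (key b hb).2.2
        rw [h2] at e1
        rw [← h1] at e2
        rw [hroot] at e1
        omega
  have hle := Nat.card_le_card_of_injective F hinj
  have hs : Nat.card (↥H.edgeFinset ⊕ H.ConnectedComponent)
      = H.edgeFinset.card + Nat.card H.ConnectedComponent := by
    rw [Nat.card_sum, Nat.card_eq_finsetCard]
  rw [hs, Nat.card_eq_fintype_card] at hle
  exact hle





lemma reachable_in_sub {H : SimpleGraph α} {v w : α}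
    (hreach : (H \ fromEdgeSet {s(v,w)}).Reachable v w) :
    ∀ {a b : α}, H.Reachable a b → (H \ fromEdgeSet {s(v,w)}).Reachable a b := by
  intro a b hab
  obtain ⟨p⟩ := hab
  induction p with
  | nil => exact Reachable.refl _
  | @cons x y z hxy q ih =>
      refine Reachable.trans ?_ ih
      by_cases he : s(x, y) = s(v, w)
      · rw [Sym2.eq_iff] at he
        rcases he with ⟨rfl, rfl⟩ | ⟨rfl, rfl⟩
        · exact hreach
        · exact hreach.symm
      · refine SimpleGraph.Adj.reachable ?_
        rw [sdiff_adj, fromEdgeSet_adj]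
        exact ⟨hxy, fun hc => he hc.1⟩

lemma exists_spanning_tree {H : SimpleGraph α} (hc : H.Connected) :
    ∃ T, T ≤ H ∧ T.IsTree := by
  classical
  generalize hn : H.edgeSet.ncard = n
  induction n using Nat.strong_induction_on generalizing H with
  | _ n ih =>
  by_cases hac : H.IsAcyclic
  · exact ⟨H, le_rfl, hc, hac⟩
  · rw [SimpleGraph.isAcyclic_iff_forall_adj_isBridge] at hac
    push_neg at hac
    obtain ⟨v, w, hadj, hnb⟩ := hac
    set H' := H \ fromEdgeSet {s(v, w)} with hH'
    have hle : H' ≤ H := sdiff_le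
    have hreach : H'.Reachable v w := by
      rw [SimpleGraph.isBridge_iff] at hnb
      push_neg at hnb
      exact hnb
    have hconn : H'.Connected := by
      have : Nonempty α := hc.nonempty
      exact Connected.mk (fun a b => reachable_in_sub hreach (hc.preconnected a b))
    have hsub : H'.edgeSet ⊂ H.edgeSet := by
      refine Set.ssubset_iff_of_subset (edgeSet_mono hle) |>.mpr ?_
      refine ⟨s(v, w), H.mem_edgeSet.mpr hadj, ?_⟩
      intro hmem
      rw [SimpleGraph.mem_edgeSet, sdiff_adj, fromEdgeSet_adj] at hmem
      exact hmem.2 ⟨rfl, hadj.ne⟩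
    have hcard : H'.edgeSet.ncard < n := hn ▸ Set.ncard_lt_ncard hsub (Set.toFinite _)
    obtain ⟨T, hT, ht⟩ := ih _ hcard hconn rfl
    exact ⟨T, hT.trans hle, ht⟩





/-- The setoid of a finpartition of `univ`. -/
def pSetoid (P : Finpartition (univ : Finset α)) : Setoid α where
  r x y := ∃ p ∈ P.parts, x ∈ p ∧ y ∈ p
  iseqv := by
    constructor
    · intro x
      exact ⟨P.part x, P.part_mem.mpr (mem_univ x), P.mem_part (mem_univ x),
        P.mem_part (mem_univ x)⟩
    · rintro x y ⟨p, hp, hx, hy⟩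
      exact ⟨p, hp, hy, hx⟩
    · rintro x y z ⟨p, hp, hx, hy⟩ ⟨q, hq, hy', hz⟩
      exact ⟨p, hp, hx, (P.eq_of_mem_parts hq hp hy' hy) ▸ hz⟩

lemma pSetoid_iff {P : Finpartition (univ : Finset α)} {x y : α} :
    pSetoid P x y ↔ y ∈ P.part x := by
  constructor
  · rintro ⟨p, hp, hx, hy⟩
    have : P.part x = p :=
      P.eq_of_mem_parts (P.part_mem.mpr (mem_univ x)) hp (P.mem_part (mem_univ x)) hx
    rw [this]; exact hy
  · intro h
    exact ⟨P.part x, P.part_mem.mpr (mem_univ x), P.mem_part (mem_univ x), h⟩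

lemma pSetoid_ofSetoid (s : Setoid α) :
    pSetoid (Finpartition.ofSetoid s) = s := by
  ext x y
  rw [pSetoid_iff, Finpartition.mem_part_ofSetoid_iff_rel]

lemma card_parts_eq (P : Finpartition (univ : Finset α)) :
    P.parts.card = Nat.card (Quotient (pSetoid P)) := by
  classical
  have hwd : ∀ a b : α, pSetoid P a b →
      (⟨P.part a, P.part_mem.mpr (mem_univ a)⟩ : ↥P.parts) = ⟨P.part b, P.part_mem.mpr (mem_univ b)⟩ := by
    intro a b hab
    rcases hab with ⟨p, hp, ha, hb⟩
    refine Subtype.ext ?_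
    show P.part a = P.part b
    rw [P.eq_of_mem_parts (P.part_mem.mpr (mem_univ a)) hp (P.mem_part (mem_univ a)) ha,
      P.eq_of_mem_parts (P.part_mem.mpr (mem_univ b)) hp (P.mem_part (mem_univ b)) hb]
  let f : Quotient (pSetoid P) → ↥P.parts :=
    Quotient.lift (fun x => ⟨P.part x, P.part_mem.mpr (mem_univ x)⟩) hwd
  have hbij : Function.Bijective f := by
    constructor
    · intro q q'
      induction q using Quotient.ind
      induction q' using Quotient.ind
      intro h
      simp only [f, Quotient.lift_mk, Subtype.mk.injEq] at h
      refine Quotient.sound ?_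
      rename_i a b
      exact ⟨P.part a, P.part_mem.mpr (mem_univ a), P.mem_part (mem_univ a),
        h ▸ P.mem_part (mem_univ b)⟩
    · rintro ⟨p, hp⟩
      obtain ⟨x, hx⟩ := P.nonempty_of_mem_parts hp
      refine ⟨Quotient.mk _ x, Subtype.ext ?_⟩
      exact P.eq_of_mem_parts (P.part_mem.mpr (mem_univ x)) hp (P.mem_part (mem_univ x)) hx
  have := Nat.card_congr (Equiv.ofBijective f hbij)
  rw [this, Nat.card_eq_finsetCard]

/-- The auxiliary bipartite graph used for supermodularity. -/
def pairGraph (s t : Setoid α) : SimpleGraph (Quotient s ⊕ Quotient t) where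
  Adj a b := ∃ x : α,
    (a = Sum.inl (Quotient.mk s x) ∧ b = Sum.inr (Quotient.mk t x)) ∨
    (a = Sum.inr (Quotient.mk t x) ∧ b = Sum.inl (Quotient.mk s x))
  symm := ⟨by
    rintro a b ⟨x, ⟨h1, h2⟩ | ⟨h1, h2⟩⟩
    · exact ⟨x, Or.inr ⟨h2, h1⟩⟩
    · exact ⟨x, Or.inl ⟨h2, h1⟩⟩⟩
  loopless := ⟨by
    rintro a ⟨x, ⟨h1, h2⟩ | ⟨h1, h2⟩⟩ <;> rw [h1] at h2 <;> cases h2⟩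

lemma pairGraph_edge_form {s t : Setoid α} {e : Sym2 (Quotient s ⊕ Quotient t)}
    (he : e ∈ (pairGraph s t).edgeSet) :
    ∃ x : α, e = s(Sum.inl (Quotient.mk s x), Sum.inr (Quotient.mk t x)) := by
  induction e with
  | _ a b =>
    rw [SimpleGraph.mem_edgeSet] at he
    obtain ⟨x, ⟨h1, h2⟩ | ⟨h1, h2⟩⟩ := he
    · exact ⟨x, by rw [h1, h2]⟩
    · exact ⟨x, by rw [h1, h2, Sym2.eq_swap]⟩

lemma sup_reachable {s t : Setoid α} {x y : α} (h : (s ⊔ t) x y) :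
    (pairGraph s t).Reachable (Sum.inl (Quotient.mk s x)) (Sum.inl (Quotient.mk s y)) := by
  rw [Setoid.sup_eq_eqvGen] at h
  have h' : Relation.EqvGen (fun a b => s a b ∨ t a b) x y := h
  clear h
  induction h' with
  | rel a b hab =>
      rcases hab with hs | ht
      · rw [Quotient.sound hs]
      · have s1 : (pairGraph s t).Adj (Sum.inl (Quotient.mk s a)) (Sum.inr (Quotient.mk t a)) :=
          ⟨a, Or.inl ⟨rfl, rfl⟩⟩
        have s2 : (pairGraph s t).Adj (Sum.inl (Quotient.mk s b)) (Sum.inr (Quotient.mk t b)) :=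
          ⟨b, Or.inl ⟨rfl, rfl⟩⟩
        refine Reachable.trans s1.reachable ?_
        rw [Quotient.sound ht]
        exact s2.reachable.symm
  | refl a => exact Reachable.refl _
  | symm a b _ ih => exact ih.symm
  | trans a b c _ _ ih1 ih2 => exact ih1.trans ih2

lemma supermod (s t : Setoid α) :
    Nat.card (Quotient s) + Nat.card (Quotient t) ≤
      Nat.card (Quotient (s ⊓ t)) + Nat.card (Quotient (s ⊔ t)) := by
  classical
  set W := pairGraph s t with hW
  have h1 : Fintype.card (Quotient s ⊕ Quotient t)
      ≤ W.edgeFinset.card + Nat.card W.ConnectedComponent :=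
    card_le_edge_add_comp W
  have hcardsum : Fintype.card (Quotient s ⊕ Quotient t)
      = Nat.card (Quotient s) + Nat.card (Quotient t) := by
    rw [Fintype.card_sum, Nat.card_eq_fintype_card, Nat.card_eq_fintype_card]
  have hedge : W.edgeFinset.card ≤ Nat.card (Quotient (s ⊓ t)) := by
    have form : ∀ e : ↥W.edgeFinset, ∃ x : α,
        e.1 = s(Sum.inl (Quotient.mk s x), Sum.inr (Quotient.mk t x)) :=
      fun e => pairGraph_edge_form (SimpleGraph.mem_edgeFinset.mp e.2)
    let m : ↥W.edgeFinset → Quotient (s ⊓ t) := fun e => Quotient.mk _ (form e).choose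
    have hm : Function.Injective m := by
      intro e e' h
      have he := (form e).choose_spec
      have he' := (form e').choose_spec
      have hrel : (s ⊓ t) (form e).choose (form e').choose := Quotient.exact h
      obtain ⟨hr1, hr2⟩ := Setoid.inf_iff_and.mp hrel
      refine Subtype.ext ?_
      rw [he, he', Quotient.sound hr1, Quotient.sound hr2]
    calc W.edgeFinset.card = Nat.card ↥W.edgeFinset := (Nat.card_eq_finsetCard _).symm
      _ ≤ _ := Nat.card_le_card_of_injective m hm
  have hcomp : Nat.card W.ConnectedComponent ≤ Nat.card (Quotient (s ⊔ t)) := by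
    let g : (Quotient s ⊕ Quotient t) → Quotient (s ⊔ t) :=
      Sum.elim
        (Quotient.lift (fun x => Quotient.mk (s ⊔ t) x)
          (fun a b h => Quotient.sound (Setoid.le_def.mp (le_sup_left : s ≤ s ⊔ t) h)))
        (Quotient.lift (fun x => Quotient.mk (s ⊔ t) x)
          (fun a b h => Quotient.sound (Setoid.le_def.mp (le_sup_right : t ≤ s ⊔ t) h)))
    have hg : ∀ a b, W.Adj a b → g a = g b := by
      rintro a b ⟨x, ⟨h1, h2⟩ | ⟨h1, h2⟩⟩ <;> rw [h1, h2] <;> rfl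
    have gsound : ∀ a b, W.Reachable a b → g a = g b := by
      intro a b hab
      obtain ⟨p⟩ := hab
      induction p with
      | nil => rfl
      | cons hadj q ih => exact (hg _ _ hadj).trans ih
    let ψ : W.ConnectedComponent → Quotient (s ⊔ t) := Quot.lift g gsound
    have vform : ∀ a : Quotient s ⊕ Quotient t, ∃ x : α,
        W.Reachable a (Sum.inl (Quotient.mk s x)) ∧ g a = Quotient.mk (s ⊔ t) x := by
      intro a
      cases a with
      | inl q =>
          induction q using Quotient.ind with
          | _ x => exact ⟨x, Reachable.refl _, rfl⟩
      | inr q =>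
          induction q using Quotient.ind with
          | _ x =>
            have hadj : W.Adj (Sum.inr (Quotient.mk t x)) (Sum.inl (Quotient.mk s x)) :=
              ⟨x, Or.inr ⟨rfl, rfl⟩⟩
            exact ⟨x, hadj.reachable, rfl⟩
    have hψ : Function.Injective ψ := by
      intro C C'
      induction C using SimpleGraph.ConnectedComponent.ind with
      | _ a =>
        induction C' using SimpleGraph.ConnectedComponent.ind with
        | _ b =>
          intro h
          obtain ⟨x, hxr, hxg⟩ := vform a
          obtain ⟨y, hyr, hyg⟩ := vform b
          have hgab : g a = g b := h
          have hxy : (s ⊔ t) x y := Quotient.exact (by rw [← hxg, ← hyg]; exact hgab)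
          exact SimpleGraph.ConnectedComponent.sound (hxr.trans ((sup_reachable hxy).trans hyr.symm))
    exact Nat.card_le_card_of_injective ψ hψ
  omega


lemma pSetoid_def {P : Finpartition (univ : Finset α)} {x y : α} :
    pSetoid P x y ↔ ∃ p ∈ P.parts, x ∈ p ∧ y ∈ p := Iff.rfl

lemma mem_edgesCrossing {H : SimpleGraph α} {P : Finpartition (univ : Finset α)} {x y : α} :
    s(x, y) ∈ edgesCrossing H P ↔ s(x, y) ∈ H.edgeFinset ∧ ¬ pSetoid P x y := by
  unfold edgesCrossing
  rw [Finset.mem_filter]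
  refine and_congr_right fun _ => not_congr ?_
  rw [pSetoid_def]
  constructor
  · rintro ⟨p, hp, hall⟩
    exact ⟨p, hp, hall x (by simp), hall y (by simp)⟩
  · rintro ⟨p, hp, hx, hy⟩
    refine ⟨p, hp, fun v hv => ?_⟩
    rcases Sym2.mem_iff.mp hv with rfl | rfl
    · exact hx
    · exact hy

lemma part_eq_of_pSetoid {P : Finpartition (univ : Finset α)} {x y : α}
    (h : pSetoid P x y) : P.part x = P.part y := by
  obtain ⟨p, hp, hx, hy⟩ := pSetoid_def.mp h
  rw [P.eq_of_mem_parts (P.part_mem.mpr (mem_univ x)) hp (P.mem_part (mem_univ x)) hx,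
    P.eq_of_mem_parts (P.part_mem.mpr (mem_univ y)) hp (P.mem_part (mem_univ y)) hy]

lemma forward_count {G T : SimpleGraph α} (hTG : T ≤ G) (hT : T.IsTree)
    {c : Sym2 α → ℕ} (hc : Set.InjOn c T.edgeSet)
    (P : Finpartition (univ : Finset α)) (hP : 2 ≤ P.parts.card) :
    P.parts.card - 1 ≤ ((edgesCrossing G P).image c).card := by
  classical
  set T' := T.deleteEdges ↑(edgesCrossing T P) with hT'
  have hle : T' ≤ T := SimpleGraph.deleteEdges_le _
  have hac : T'.IsAcyclic := fun v w hcyc => hT.IsAcyclic (w.mapLe hle) (hcyc.mapLe hle)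
  have same_part : ∀ {x y : α}, T'.Reachable x y → P.part x = P.part y := by
    intro x y hxy
    obtain ⟨p⟩ := hxy
    induction p with
    | nil => rfl
    | @cons a b z hab q ih =>
        refine Eq.trans ?_ ih
        have he : s(a, b) ∈ T'.edgeSet := hab
        rw [hT', SimpleGraph.edgeSet_deleteEdges] at he
        obtain ⟨heT, hnc⟩ := he
        have hmem : s(a, b) ∈ T.edgeFinset := SimpleGraph.mem_edgeFinset.mpr heT
        have hrel : pSetoid P a b := by
          by_contra hcon
          exact hnc (by rw [Finset.mem_coe]; exact mem_edgesCrossing.mpr ⟨hmem, hcon⟩)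
        exact part_eq_of_pSetoid hrel
  have hparts : P.parts.card ≤ Nat.card T'.ConnectedComponent := by
    have hne : ∀ p : ↥P.parts, p.1.Nonempty := fun p => P.nonempty_of_mem_parts p.2
    let el : ↥P.parts → α := fun p => (hne p).choose
    have hel : ∀ p : ↥P.parts, el p ∈ p.1 := fun p => (hne p).choose_spec
    let f : ↥P.parts → T'.ConnectedComponent := fun p => T'.connectedComponentMk (el p)
    have hf : Function.Injective f := by
      intro p q h
      have hpq := same_part (SimpleGraph.ConnectedComponent.exact h)
      refine Subtype.ext ?_
      rw [← P.eq_of_mem_parts (P.part_mem.mpr (mem_univ (el p))) p.2 (P.mem_part (mem_univ (el p))) (hel p),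
        ← P.eq_of_mem_parts (P.part_mem.mpr (mem_univ (el q))) q.2 (P.mem_part (mem_univ (el q))) (hel q), hpq]
    calc P.parts.card = Nat.card ↥P.parts := (Nat.card_eq_finsetCard _).symm
      _ ≤ _ := Nat.card_le_card_of_injective f hf
  have hcnt := edge_add_comp_le_card hac
  have hedgesub : edgesCrossing T P ⊆ T.edgeFinset := Finset.filter_subset _ _
  have hTcard : T.edgeFinset.card + 1 = Fintype.card α := hT.card_edgeFinset
  have hT'fin : T'.edgeFinset = T.edgeFinset \ edgesCrossing T P := by
    ext e
    simp only [SimpleGraph.mem_edgeFinset, hT', SimpleGraph.edgeSet_deleteEdges,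
      Set.mem_diff, Finset.mem_sdiff, Finset.mem_coe, SimpleGraph.mem_edgeFinset]
  have hT'card : T'.edgeFinset.card = T.edgeFinset.card - (edgesCrossing T P).card := by
    rw [hT'fin, Finset.card_sdiff_of_subset hedgesub]
  have hcrle : (edgesCrossing T P).card ≤ T.edgeFinset.card := Finset.card_le_card hedgesub
  have hkey : P.parts.card - 1 ≤ (edgesCrossing T P).card := by
    have hnc : ∀ (inst : Fintype T'.edgeSet), (@SimpleGraph.edgeFinset _ T' inst).card
        = T'.edgeSet.ncard := fun _ => by
      rw [← Set.ncard_coe_finset, SimpleGraph.coe_edgeFinset]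
    rw [hnc] at hcnt hT'card
    omega
  have himg : (edgesCrossing T P).image c ⊆ (edgesCrossing G P).image c :=
    Finset.image_subset_image (Finset.filter_subset_filter _ (edgeFinset_mono hTG))
  have hinj2 : ((edgesCrossing T P).image c).card = (edgesCrossing T P).card :=
    Finset.card_image_of_injOn (hc.mono (subset_trans (Finset.coe_subset.mpr hedgesub)
      (subset_of_eq (coe_edgeFinset T))))
  have hfin := Finset.card_le_card himg
  omega


lemma edgesCrossing_deleteEdges (H : SimpleGraph α) (P : Finpartition (univ : Finset α))
    (e : Sym2 α) :
    edgesCrossing (H.deleteEdges {e}) P = (edgesCrossing H P).erase e := by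
  unfold edgesCrossing
  rw [← Finset.filter_erase]
  congr 1
  ext g
  simp only [SimpleGraph.mem_edgeFinset, SimpleGraph.edgeSet_deleteEdges, Set.mem_diff,
    Set.mem_singleton_iff, Finset.mem_erase]
  tauto

/-- The partition condition. -/
def Cond (H : SimpleGraph α) (c : Sym2 α → ℕ) : Prop :=
  ∀ P : Finpartition (univ : Finset α), 2 ≤ P.parts.card →
    P.parts.card - 1 ≤ ((edgesCrossing H P).image c).card

lemma connected_of_cond [Nonempty α] {H : SimpleGraph α} {c : Sym2 α → ℕ}
    (hcond : Cond H c) : H.Connected := by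
  refine SimpleGraph.Connected.mk fun u v => ?_
  by_contra huv
  classical
  set S : Finset α := univ.filter (fun x => H.Reachable u x) with hS
  have hu : u ∈ S := by
    simp only [hS, Finset.mem_filter, mem_univ, true_and]
    exact Reachable.refl u
  have hv : v ∉ S := by simp only [hS, Finset.mem_filter, mem_univ, true_and]; exact huv
  have hvmem : v ∈ univ \ S := Finset.mem_sdiff.mpr ⟨mem_univ v, hv⟩
  have hSne : S ≠ univ \ S := by
    intro h
    rw [h] at hu
    exact (Finset.mem_sdiff.mp hu).2 (h ▸ hu)
  let P2 : Finpartition (univ : Finset α) :=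
    { parts := {S, univ \ S}
      supIndep := (Finset.supIndep_pair hSne).mpr Finset.disjoint_sdiff
      sup_parts := by
        rw [Finset.sup_insert, Finset.sup_singleton, id]
        exact Finset.union_sdiff_of_subset (Finset.subset_univ S)
      bot_notMem := by
        simp only [Finset.bot_eq_empty, Finset.mem_insert, Finset.mem_singleton]
        push_neg
        constructor
        · intro h
          rw [← h] at hu
          exact absurd hu (Finset.notMem_empty u)
        · intro h
          rw [← h] at hvmem
          exact absurd hvmem (Finset.notMem_empty v) }
  have hcard2 : P2.parts.card = 2 := Finset.card_pair hSne
  have hclosed : ∀ {x y : α}, H.Adj x y → (x ∈ S ↔ y ∈ S) := by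
    intro x y hxy
    simp only [hS, Finset.mem_filter, mem_univ, true_and]
    exact ⟨fun h => h.trans hxy.reachable, fun h => h.trans hxy.symm.reachable⟩
  have hcross : edgesCrossing H P2 = ∅ := by
    rw [Finset.eq_empty_iff_forall_notMem]
    intro g hg
    obtain ⟨x, y, rfl⟩ : ∃ x y, g = s(x, y) := ⟨g.out.1, g.out.2, g.out_eq.symm⟩
    rw [edgesCrossing, Finset.mem_filter] at hg
    obtain ⟨hmem, hno⟩ := hg
    have hadj : H.Adj x y := H.mem_edgeSet.mp (SimpleGraph.mem_edgeFinset.mp hmem)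
    refine hno ?_
    by_cases hx : x ∈ S
    · refine ⟨S, by simp [P2], fun w hw => ?_⟩
      rcases Sym2.mem_iff.mp hw with rfl | rfl
      · exact hx
      · exact (hclosed hadj).mp hx
    · refine ⟨univ \ S, by simp [P2], fun w hw => ?_⟩
      rcases Sym2.mem_iff.mp hw with rfl | rfl
      · exact Finset.mem_sdiff.mpr ⟨mem_univ _, hx⟩
      · exact Finset.mem_sdiff.mpr ⟨mem_univ _, fun hy => hx ((hclosed hadj).mpr hy)⟩
  have := hcond P2 (by rw [hcard2])
  rw [hcross, hcard2] at this
  simp at this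

lemma backward_main [Nonempty α] {H : SimpleGraph α} {c : Sym2 α → ℕ}
    (hcond : Cond H c) :
    ∃ T, T ≤ H ∧ T.IsTree ∧ Set.InjOn c T.edgeSet := by
  classical
  generalize hn : H.edgeSet.ncard = n
  induction n using Nat.strong_induction_on generalizing H with
  | _ n ih =>
  have hconn : H.Connected := connected_of_cond hcond
  by_cases hinj : Set.InjOn c H.edgeSet
  · obtain ⟨T, hTH, hT⟩ := exists_spanning_tree hconn
    exact ⟨T, hTH, hT, hinj.mono (SimpleGraph.edgeSet_mono hTH)⟩
  · rw [Set.InjOn] at hinj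
    push_neg at hinj
    obtain ⟨e, he, f, hf, hcef, hef⟩ := hinj
    have hdich : Cond (H.deleteEdges {e}) c ∨ Cond (H.deleteEdges {f}) c := by
      by_contra hboth
      push_neg at hboth
      obtain ⟨hnd1, hnd2⟩ := hboth
      unfold Cond at hnd1 hnd2
      push_neg at hnd1 hnd2
      obtain ⟨P1, hb1, hc1⟩ := hnd1
      obtain ⟨P2, hb2, hc2⟩ := hnd2
      rw [edgesCrossing_deleteEdges] at hc1 hc2
      set A1 := (edgesCrossing H P1).image c with hA1
      set A2 := (edgesCrossing H P2).image c with hA2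
      set Ae := ((edgesCrossing H P1).erase e).image c with hAe
      set Af := ((edgesCrossing H P2).erase f).image c with hAf
      have h1 : P1.parts.card - 1 ≤ A1.card := hcond P1 hb1
      have h2 : P2.parts.card - 1 ≤ A2.card := hcond P2 hb2
      have hsub1 : A1 ⊆ insert (c e) Ae := by
        intro x hx
        obtain ⟨g, hg, rfl⟩ := Finset.mem_image.mp hx
        by_cases hge : g = e
        · rw [hge]; exact Finset.mem_insert_self _ _
        · exact Finset.mem_insert_of_mem
            (Finset.mem_image_of_mem c (Finset.mem_erase.mpr ⟨hge, hg⟩))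
      have hsub2 : A2 ⊆ insert (c f) Af := by
        intro x hx
        obtain ⟨g, hg, rfl⟩ := Finset.mem_image.mp hx
        by_cases hgf : g = f
        · rw [hgf]; exact Finset.mem_insert_self _ _
        · exact Finset.mem_insert_of_mem
            (Finset.mem_image_of_mem c (Finset.mem_erase.mpr ⟨hgf, hg⟩))
      have key1 : ∀ g ∈ edgesCrossing H P1, c g = c e → g = e := by
        intro g hg hcg
        by_contra hne
        have hmem : c e ∈ Ae := hcg ▸ Finset.mem_image_of_mem c (Finset.mem_erase.mpr ⟨hne, hg⟩)
        have : A1 ⊆ Ae := by rwa [Finset.insert_eq_self.mpr hmem] at hsub1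
        have := Finset.card_le_card this
        omega
      have key2 : ∀ g ∈ edgesCrossing H P2, c g = c f → g = f := by
        intro g hg hcg
        by_contra hne
        have hmem : c f ∈ Af := hcg ▸ Finset.mem_image_of_mem c (Finset.mem_erase.mpr ⟨hne, hg⟩)
        have : A2 ⊆ Af := by rwa [Finset.insert_eq_self.mpr hmem] at hsub2
        have := Finset.card_le_card this
        omega
      have keyE : e ∈ edgesCrossing H P1 := by
        have hnsub : ¬ A1 ⊆ Ae := by
          intro hss
          have := Finset.card_le_card hss
          omega
        obtain ⟨x, hx, hxe⟩ := Finset.not_subset.mp hnsub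
        obtain ⟨g, hg, rfl⟩ := Finset.mem_image.mp hx
        by_cases hge : g = e
        · exact hge ▸ hg
        · exact absurd (Finset.mem_image_of_mem c (Finset.mem_erase.mpr ⟨hge, hg⟩)) hxe
      have keyF : f ∈ edgesCrossing H P2 := by
        have hnsub : ¬ A2 ⊆ Af := by
          intro hss
          have := Finset.card_le_card hss
          omega
        obtain ⟨x, hx, hxf⟩ := Finset.not_subset.mp hnsub
        obtain ⟨g, hg, rfl⟩ := Finset.mem_image.mp hx
        by_cases hgf : g = f
        · exact hgf ▸ hg
        · exact absurd (Finset.mem_image_of_mem c (Finset.mem_erase.mpr ⟨hgf, hg⟩)) hxf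
      have hfP1 : f ∉ edgesCrossing H P1 := fun h => hef (key1 f h hcef.symm).symm
      have heP2 : e ∉ edgesCrossing H P2 := fun h => hef (key2 e h hcef)
      -- setoids
      set s1 := pSetoid P1 with hs1
      set s2 := pSetoid P2 with hs2
      have hSM : (edgesCrossing H (Finpartition.ofSetoid (s1 ⊓ s2))).image c ⊆ A1 ∪ A2 := by
        intro x hx
        obtain ⟨g, hg, rfl⟩ := Finset.mem_image.mp hx
        obtain ⟨a, b, rfl⟩ : ∃ a b, g = s(a, b) := ⟨g.out.1, g.out.2, g.out_eq.symm⟩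
        rw [mem_edgesCrossing, pSetoid_ofSetoid] at hg
        obtain ⟨hmem, hrel⟩ := hg
        have hor : ¬ s1 a b ∨ ¬ s2 a b := by
          by_contra hcc
          push_neg at hcc
          exact hrel (Setoid.inf_iff_and.mpr ⟨hcc.1, hcc.2⟩)
        rcases hor with h | h
        · exact Finset.mem_union_left _ (Finset.mem_image_of_mem c (mem_edgesCrossing.mpr ⟨hmem, h⟩))
        · exact Finset.mem_union_right _ (Finset.mem_image_of_mem c (mem_edgesCrossing.mpr ⟨hmem, h⟩))
      have hSJ : (edgesCrossing H (Finpartition.ofSetoid (s1 ⊔ s2))).image c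
          ⊆ (A1 ∩ A2).erase (c e) := by
        intro x hx
        obtain ⟨g, hg, rfl⟩ := Finset.mem_image.mp hx
        obtain ⟨a, b, rfl⟩ : ∃ a b, g = s(a, b) := ⟨g.out.1, g.out.2, g.out_eq.symm⟩
        rw [mem_edgesCrossing, pSetoid_ofSetoid] at hg
        obtain ⟨hmem, hrel⟩ := hg
        have hn1 : ¬ s1 a b := fun h => hrel (Setoid.le_def.mp (le_sup_left : s1 ≤ s1 ⊔ s2) h)
        have hn2 : ¬ s2 a b := fun h => hrel (Setoid.le_def.mp (le_sup_right : s2 ≤ s1 ⊔ s2) h)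
        have hcr1 : s(a, b) ∈ edgesCrossing H P1 := mem_edgesCrossing.mpr ⟨hmem, hn1⟩
        have hcr2 : s(a, b) ∈ edgesCrossing H P2 := mem_edgesCrossing.mpr ⟨hmem, hn2⟩
        refine Finset.mem_erase.mpr ⟨?_, Finset.mem_inter.mpr
          ⟨Finset.mem_image_of_mem c hcr1, Finset.mem_image_of_mem c hcr2⟩⟩
        intro hcge
        exact heP2 ((key1 _ hcr1 hcge) ▸ hcr2)
      have hceA : c e ∈ A1 ∩ A2 := by
        refine Finset.mem_inter.mpr ⟨Finset.mem_image_of_mem c keyE, ?_⟩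
        rw [hcef]
        exact Finset.mem_image_of_mem c keyF
      -- cardinalities
      have hb1' : P1.parts.card = Nat.card (Quotient s1) := card_parts_eq P1
      have hb2' : P2.parts.card = Nat.card (Quotient s2) := card_parts_eq P2
      have hbM : (Finpartition.ofSetoid (s1 ⊓ s2)).parts.card = Nat.card (Quotient (s1 ⊓ s2)) := by
        rw [card_parts_eq, pSetoid_ofSetoid]
      have hbJ : (Finpartition.ofSetoid (s1 ⊔ s2)).parts.card = Nat.card (Quotient (s1 ⊔ s2)) := by
        rw [card_parts_eq, pSetoid_ofSetoid]
      have hsup := supermod s1 s2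
      -- M has at least two parts
      obtain ⟨x, y, hexy⟩ : ∃ x y, e = s(x, y) := ⟨e.out.1, e.out.2, e.out_eq.symm⟩
      have hM2 : 2 ≤ (Finpartition.ofSetoid (s1 ⊓ s2)).parts.card := by
        have hx1 : ¬ s1 x y := (mem_edgesCrossing.mp (hexy ▸ keyE)).2
        have hxyM : ¬ pSetoid (Finpartition.ofSetoid (s1 ⊓ s2)) x y := by
          rw [pSetoid_ofSetoid]
          exact fun h => hx1 (Setoid.inf_iff_and.mp h).1
        refine Finset.one_lt_card.mpr ⟨(Finpartition.ofSetoid (s1 ⊓ s2)).part x,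
          (Finpartition.part_mem _).mpr (mem_univ x), (Finpartition.ofSetoid (s1 ⊓ s2)).part y,
          (Finpartition.part_mem _).mpr (mem_univ y), ?_⟩
        intro hpq
        refine hxyM (pSetoid_iff.mpr ?_)
        rw [hpq]
        exact Finpartition.mem_part _ (mem_univ y)
      have hMcond := hcond (Finpartition.ofSetoid (s1 ⊓ s2)) hM2
      -- intersection lower bound
      have hi1 : 1 ≤ (A1 ∩ A2).card := Finset.card_pos.mpr ⟨c e, hceA⟩
      have hiJ : (Finpartition.ofSetoid (s1 ⊔ s2)).parts.card ≤ (A1 ∩ A2).card := by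
        by_cases hJ2 : 2 ≤ (Finpartition.ofSetoid (s1 ⊔ s2)).parts.card
        · have hJcond := hcond (Finpartition.ofSetoid (s1 ⊔ s2)) hJ2
          have hle2 := Finset.card_le_card hSJ
          rw [Finset.card_erase_of_mem hceA] at hle2
          omega
        · omega
      have hMle := Finset.card_le_card hSM
      have huni := Finset.card_union_add_card_inter A1 A2
      have hA1le := Finset.card_le_card hsub1
      have hA2le := Finset.card_le_card hsub2
      have hAeins := Finset.card_insert_le (c e) Ae
      have hAfins := Finset.card_insert_le (c f) Af
      rw [hb1'] at h1 hb1 hc1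
      rw [hb2'] at h2 hb2 hc2
      rw [hbM] at hMcond hM2
      rw [hbJ] at hiJ
      omega
    have hdel : ∀ g ∈ H.edgeSet, (H.deleteEdges {g}).edgeSet.ncard < n := by
      intro g hg
      rw [← hn]
      refine Set.ncard_lt_ncard ?_ (Set.toFinite _)
      rw [SimpleGraph.edgeSet_deleteEdges]
      exact (Set.ssubset_iff_of_subset Set.diff_subset).mpr ⟨g, hg, fun h => h.2 rfl⟩
    rcases hdich with hd | hd
    · obtain ⟨T, hTH, hT, hI⟩ := ih _ (hdel e he) hd rfl
      exact ⟨T, hTH.trans (SimpleGraph.deleteEdges_le _), hT, hI⟩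
    · obtain ⟨T, hTH, hT, hI⟩ := ih _ (hdel f hf) hd rfl
      exact ⟨T, hTH.trans (SimpleGraph.deleteEdges_le _), hT, hI⟩


end RainbowAux

end RainbowAuxSection

/-- An edge-colored finite connected simple graph `G` on `n`
vertices has a rainbow spanning tree iff for every `2 ≤ k ≤ n` and every
partition of `V(G)` into `k` parts, at least `k-1` colors appear on the
crossing edges. -/
theorem stmt5 {V : Type} [Fintype V] (G : SimpleGraph V) (hG : G.Connected)
    (c : Sym2 V → ℕ) :
    (∃ T : SimpleGraph V, T ≤ G ∧ T.IsTree ∧ Set.InjOn c T.edgeSet) ↔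
      ∀ k, 2 ≤ k → k ≤ Fintype.card V →
        ∀ P : Finpartition (Finset.univ : Finset V), P.parts.card = k →
          k - 1 ≤ ((edgesCrossing G P).image c).card := by
  classical
  constructor
  · rintro ⟨T, hTG, hT, hc⟩ k hk2 hkn P hP
    have h := RainbowAux.forward_count hTG hT hc P (by rw [hP]; exact hk2)
    rwa [hP] at h
  · intro hyp
    have hne : Nonempty V := hG.nonempty
    have hcond : RainbowAux.Cond G c := fun P hP =>
      hyp P.parts.card hP (le_trans P.card_parts_le_card (le_of_eq Finset.card_univ)) P rfl
    exact RainbowAux.backward_main hcond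
end

section
/- Let G be a finite simple graph and t a positive integer such that for every partition P of V(G), the number of crossing edges satisfies |cr(P,G)| ≥ t(|P| - 1). Then for every partition P of V(G) with |P| ≥ 3, the anti-Ramsey number satisfies r(G,t) ≥ |E(P,G)| + t(|P| - 2). -/
open Finset
open scoped Classical

lemma crossing_lower_bound_aux {V : Type} [Fintype V] (T : SimpleGraph V)
    (hT : T.Connected) (P : Finpartition (Finset.univ : Finset V)) :
    P.parts.card ≤ (T.edgeFinset.filter
      (fun e => ¬ ∃ p ∈ P.parts, ∀ v ∈ e, v ∈ p)).card + 1 := by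
  classical
  set X := T.edgeFinset.filter (fun e => ¬ ∃ p ∈ P.parts, ∀ v ∈ e, v ∈ p) with hX
  rcases Finset.eq_empty_or_nonempty P.parts with hemp | ⟨p₀f, hp₀⟩
  · simp [hemp]
  let α := {p : Finset V // p ∈ P.parts}
  let H : SimpleGraph α :=
    { Adj := fun p q => p ≠ q ∧ ∃ a ∈ p.1, ∃ b ∈ q.1, T.Adj a b
      symm := ⟨by
        rintro p q ⟨hne, a, ha, b, hb, hab⟩
        exact ⟨hne.symm, b, hb, a, ha, hab.symm⟩⟩
      loopless := ⟨fun p hp => hp.1 rfl⟩ }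
  have hpartmem : ∀ v : V, ∃ p ∈ P.parts, v ∈ p := fun v => P.exists_mem (Finset.mem_univ v)
  choose pt hptmem hpt using hpartmem
  have hconn : H.Preconnected := by
    have main : ∀ {a b : V} (w : T.Walk a b) (pa pb : α), a ∈ pa.1 → b ∈ pb.1 →
        H.Reachable pa pb := by
      intro a b w
      induction w with
      | nil =>
        intro pa pb ha hb
        have : pa = pb := Subtype.ext (P.eq_of_mem_parts pa.2 pb.2 ha hb)
        rw [this]
      | @cons u x b h q ih =>
        intro pa pb ha hb
        have hre := ih ⟨pt x, hptmem x⟩ pb (hpt x) hb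
        by_cases hax : pa = ⟨pt x, hptmem x⟩
        · rwa [hax]
        · exact (SimpleGraph.Adj.reachable
            (show H.Adj pa ⟨pt x, hptmem x⟩ from ⟨hax, u, ha, x, hpt x, h⟩)).trans hre
    intro p q
    obtain ⟨v, hv⟩ := P.nonempty_of_mem_parts p.2
    obtain ⟨w, hw⟩ := P.nonempty_of_mem_parts q.2
    obtain ⟨wk⟩ := hT.preconnected v w
    exact main wk p q hv hw
  have hne : Nonempty α := ⟨⟨p₀f, hp₀⟩⟩
  set p₀ : α := ⟨p₀f, hp₀⟩ with hp₀def
  obtain ⟨v₀, hv₀⟩ := P.nonempty_of_mem_parts hp₀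
  have step : ∀ p : α, ∃ q : α, p ≠ p₀ → H.Adj p q ∧ H.dist q p₀ < H.dist p p₀ := by
    intro p
    by_cases hnep : p = p₀
    · exact ⟨p₀, fun hcon => absurd hnep hcon⟩
    · obtain ⟨w, hwlen⟩ := (hconn p p₀).exists_walk_length_eq_dist
      obtain ⟨x, hadj, w', rfl⟩ := SimpleGraph.Walk.exists_eq_cons_of_ne hnep w
      refine ⟨x, fun _ => ⟨hadj, ?_⟩⟩
      have h1 : H.dist x p₀ ≤ w'.length := SimpleGraph.dist_le w'
      have h2 : (SimpleGraph.Walk.cons hadj w').length = w'.length + 1 :=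
        SimpleGraph.Walk.length_cons _ _
      omega
  choose g hg using step
  have step2 : ∀ p : α, ∃ a b, p ≠ p₀ → a ∈ p.1 ∧ b ∈ (g p).1 ∧ T.Adj a b := by
    intro p
    by_cases hnep : p = p₀
    · exact ⟨v₀, v₀, fun hcon => absurd hnep hcon⟩
    · obtain ⟨_, a, ha, b, hb, hab⟩ := (hg p hnep).1
      exact ⟨a, b, fun _ => ⟨ha, hb, hab⟩⟩
  choose A B hAB using step2
  have key := Finset.card_le_card_of_injOn (s := Finset.univ.erase p₀) (t := X)
      (fun p => s(A p, B p)) ?_ ?_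
  · have hcard : (Finset.univ.erase p₀).card = P.parts.card - 1 := by
      rw [Finset.card_erase_of_mem (Finset.mem_univ _), Finset.card_univ]
      have : Fintype.card α = P.parts.card := Fintype.card_coe P.parts
      rw [this]
    have hpos : 1 ≤ P.parts.card := Finset.card_pos.mpr ⟨p₀f, hp₀⟩
    omega
  · intro p hp
    have hnep : p ≠ p₀ := (Finset.mem_erase.mp hp).1
    obtain ⟨ha, hb, hab⟩ := hAB p hnep
    rw [hX, Finset.mem_coe, Finset.mem_filter]
    refine ⟨SimpleGraph.mem_edgeFinset.mpr hab, ?_⟩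
    rintro ⟨r, hr, hall⟩
    have hAr : A p ∈ r := hall _ (Sym2.mem_mk_left _ _)
    have hBr : B p ∈ r := hall _ (Sym2.mem_mk_right _ _)
    have h1 : p.1 = r := P.eq_of_mem_parts p.2 hr ha hAr
    have h2 : (g p).1 = r := P.eq_of_mem_parts (g p).2 hr hb hBr
    exact (hg p hnep).1.1 (Subtype.ext (h1.trans h2.symm))
  · intro p1 h1 p2 h2 heq
    have hne1 : p1 ≠ p₀ := (Finset.mem_erase.mp (Finset.mem_coe.mp h1)).1
    have hne2 : p2 ≠ p₀ := (Finset.mem_erase.mp (Finset.mem_coe.mp h2)).1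
    obtain ⟨ha1, hb1, -⟩ := hAB p1 hne1
    obtain ⟨ha2, hb2, -⟩ := hAB p2 hne2
    rcases Sym2.eq_iff.mp heq with ⟨hA, hB⟩ | ⟨hA, hB⟩
    · exact Subtype.ext (P.eq_of_mem_parts p1.2 p2.2 ha1 (hA ▸ ha2))
    · have e1 : p1 = g p2 := Subtype.ext (P.eq_of_mem_parts p1.2 (g p2).2 ha1 (hA ▸ hb2))
      have e2 : p2 = g p1 := Subtype.ext (P.eq_of_mem_parts p2.2 (g p1).2 ha2 (hB.symm ▸ hb1))
      have d1 := (hg p1 hne1).2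
      have d2 := (hg p2 hne2).2
      rw [← e2] at d1
      rw [← e1] at d2
      omega

/-- (Lower bound.) If every partition `P` of `V(G)` satisfies
`|cr(P,G)| ≥ t(|P|-1)`, then for every partition `P` with `|P| ≥ 3`,
`r(G,t) ≥ |E(P,G)| + t(|P|-2)`. -/
theorem stmt8 {V : Type} [Fintype V] (G : SimpleGraph V) (t : ℕ) (ht : 0 < t)
    (h : ∀ P : Finpartition (Finset.univ : Finset V),
      t * (P.parts.card - 1) ≤ (edgesCrossing G P).card) :
    ∀ P : Finpartition (Finset.univ : Finset V), 3 ≤ P.parts.card →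
      (edgesNonCrossing G P).card + t * (P.parts.card - 2) ≤ antiRamsey G t := by
  intro P hs
  classical
  set s := P.parts.card with hsdef
  have hcr0 := h P
  set m := t * (s - 2) with hm
  set M := t * (s - 1) with hM
  have hm1 : 1 ≤ m := Nat.mul_pos ht (by omega)
  have hmle : m ≤ M := Nat.mul_le_mul_left t (by omega)
  obtain ⟨D, hDsub, hDcard⟩ := Finset.exists_subset_card_eq (s := edgesCrossing G P) (n := m - 1) (by omega)
  set S := edgesNonCrossing G P ∪ D with hSdef
  have hdisjNC : Disjoint (edgesNonCrossing G P) (edgesCrossing G P) :=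
    Finset.disjoint_filter_filter_not _ _ _
  have hSsub : S ⊆ G.edgeFinset :=
    Finset.union_subset (Finset.filter_subset _ _) (hDsub.trans (Finset.filter_subset _ _))
  set c : Sym2 V → ℕ := fun e => if e ∈ S then ((Fintype.equivFin (Sym2 V)) e : ℕ) + 1 else 0
    with hcdef
  have hc_mem : ∀ e ∈ S, c e = ((Fintype.equivFin (Sym2 V)) e : ℕ) + 1 := by
    intro e he; simp only [hcdef]; exact if_pos he
  have hc_not : ∀ e, e ∉ S → c e = 0 := by
    intro e he; simp only [hcdef]; exact if_neg he
  have hnotS : ∀ e ∈ edgesCrossing G P, e ∉ D → e ∉ S := by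
    intro e he hD hmem
    rcases Finset.mem_union.mp hmem with h1 | h1
    · exact (Finset.mem_filter.mp he).2 (Finset.mem_filter.mp h1).2
    · exact hD h1
  have himg : (G.edgeFinset.image c).card = (edgesNonCrossing G P).card + m := by
    have hinj : Set.InjOn c ↑S := by
      intro e1 h1 e2 h2 hcc
      rw [hc_mem e1 (Finset.mem_coe.mp h1), hc_mem e2 (Finset.mem_coe.mp h2)] at hcc
      exact (Fintype.equivFin (Sym2 V)).injective
        (Fin.val_injective (Nat.add_right_cancel hcc))
    have hex : ∃ e₀, e₀ ∈ G.edgeFinset \ S ∧ c e₀ = 0 := by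
      have hns : ¬ (edgesCrossing G P ⊆ D) := by
        intro hsubc
        have := Finset.card_le_card hsubc
        omega
      obtain ⟨e₀, he₀, he₀D⟩ := Finset.not_subset.mp hns
      have he₀S : e₀ ∉ S := hnotS e₀ he₀ he₀D
      exact ⟨e₀, Finset.mem_sdiff.mpr ⟨Finset.filter_subset _ _ he₀, he₀S⟩, hc_not _ he₀S⟩
    rw [← Finset.union_sdiff_of_subset hSsub, Finset.image_union]
    have himgS : (S.image c).card = S.card := Finset.card_image_of_injOn hinj
    have h0 : (G.edgeFinset \ S).image c = {0} := by
      apply Finset.eq_singleton_iff_nonempty_unique_mem.mpr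
      constructor
      · obtain ⟨e₀, he₀, hc0⟩ := hex
        exact ⟨0, Finset.mem_image.mpr ⟨e₀, he₀, hc0⟩⟩
      · rintro x hx
        obtain ⟨e, he, rfl⟩ := Finset.mem_image.mp hx
        exact hc_not e (Finset.mem_sdiff.mp he).2
    rw [h0]
    have hdisj0 : Disjoint (S.image c) {0} := by
      rw [Finset.disjoint_singleton_right]
      intro hmem
      obtain ⟨e, he, hce⟩ := Finset.mem_image.mp hmem
      rw [hc_mem e he] at hce
      omega
    rw [Finset.card_union_of_disjoint hdisj0, himgS, Finset.card_singleton]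
    have hcardS : S.card = (edgesNonCrossing G P).card + D.card :=
      Finset.card_union_of_disjoint (hdisjNC.mono_right hDsub)
    rw [hcardS, hDcard]
    omega
  have hno : ¬ HasRainbowSpanningTrees G c t := by
    rintro ⟨T, hle, htree, hrain, hdisjT⟩
    set A : Fin t → Finset (Sym2 V) := fun i =>
      ((T i).edgeFinset.filter (fun e => ¬ ∃ p ∈ P.parts, ∀ v ∈ e, v ∈ p)) ∩ D with hA
    have key : ∀ i : Fin t, s - 2 ≤ (A i).card := by
      intro i
      have h1 : s ≤ ((T i).edgeFinset.filter
          (fun e => ¬ ∃ p ∈ P.parts, ∀ v ∈ e, v ∈ p)).card + 1 :=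
        crossing_lower_bound_aux (T i) (htree i).isConnected P
      have h2 : (((T i).edgeFinset.filter
          (fun e => ¬ ∃ p ∈ P.parts, ∀ v ∈ e, v ∈ p)) \ D).card ≤ 1 := by
        apply Finset.card_le_one.mpr
        intro e1 h1' e2 h2'
        have hm1' := Finset.mem_sdiff.mp h1'
        have hm2' := Finset.mem_sdiff.mp h2'
        have hx1 := Finset.mem_filter.mp hm1'.1
        have hx2 := Finset.mem_filter.mp hm2'.1
        have hn1 : e1 ∉ S := by
          intro hmem
          rcases Finset.mem_union.mp hmem with hh | hh
          · exact hx1.2 (Finset.mem_filter.mp hh).2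
          · exact hm1'.2 hh
        have hn2 : e2 ∉ S := by
          intro hmem
          rcases Finset.mem_union.mp hmem with hh | hh
          · exact hx2.2 (Finset.mem_filter.mp hh).2
          · exact hm2'.2 hh
        exact hrain i (SimpleGraph.mem_edgeFinset.mp hx1.1)
          (SimpleGraph.mem_edgeFinset.mp hx2.1)
          (by rw [hc_not _ hn1, hc_not _ hn2])
      have h3 := Finset.card_inter_add_card_sdiff
        ((T i).edgeFinset.filter (fun e => ¬ ∃ p ∈ P.parts, ∀ v ∈ e, v ∈ p)) D
      have hAeq : (A i).card = (((T i).edgeFinset.filter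
          (fun e => ¬ ∃ p ∈ P.parts, ∀ v ∈ e, v ∈ p)) ∩ D).card := by rw [hA]
      omega
    have hdisjA : ∀ i ∈ (Finset.univ : Finset (Fin t)), ∀ j ∈ Finset.univ, i ≠ j →
        Disjoint (A i) (A j) := by
      intro i _ j _ hij
      apply Finset.disjoint_left.mpr
      intro e hei hej
      have he1 : e ∈ (T i).edgeSet := SimpleGraph.mem_edgeFinset.mp
        (Finset.mem_filter.mp (Finset.mem_inter.mp hei).1).1
      have he2 : e ∈ (T j).edgeSet := SimpleGraph.mem_edgeFinset.mp
        (Finset.mem_filter.mp (Finset.mem_inter.mp hej).1).1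
      exact Set.disjoint_left.mp (hdisjT i j hij) he1 he2
    have hbi := Finset.card_biUnion hdisjA
    have hsub : (Finset.univ.biUnion A) ⊆ D :=
      Finset.biUnion_subset.mpr (fun i _ => Finset.inter_subset_right)
    have hcardle := Finset.card_le_card hsub
    have hsum : m ≤ ∑ i : Fin t, (A i).card := by
      have hle2 := Finset.sum_le_sum (fun i (_ : i ∈ (Finset.univ : Finset (Fin t))) => key i)
      rw [Finset.sum_const, Finset.card_univ, Fintype.card_fin, smul_eq_mul] at hle2
      exact le_trans (le_of_eq hm) hle2
    omega
  have hbdd : BddAbove {m' | ∃ c' : Sym2 V → ℕ, (G.edgeFinset.image c').card = m' ∧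
      ¬ HasRainbowSpanningTrees G c' t} := by
    refine ⟨G.edgeFinset.card, ?_⟩
    rintro m' ⟨c', hc', -⟩
    exact hc' ▸ Finset.card_image_le
  exact le_csSup hbdd ⟨c, himg, hno⟩
end

section
/- Let G be a finite simple graph on at least 3 vertices, t a positive integer, and fix an edge-coloring of G using at least max_{P: |P|≥3}{ |E(P,G)| + t(|P|-2) } + 1 colors, where the maximum runs over all partitions P of V(G) with at least 3 parts. For any partition P define η(P,G) = |E(P,G)| - |c(E(P,G))| and ξ(P,G) = |c(E(P,G)) ∩ c(cr(P,G))|. Then: (1) for every partition P of V(G) with |P| ≥ 3, |c(cr(P,G))| ≥ t(|P|-2) + η(P,G) + ξ(P,G) + 1; and (2) for every partition P with |P| = 2 such that |c(E(G))| > |E(P,G)|, we have |c(cr(P,G))| ≥ η(P,G) + ξ(P,G) + 1. -/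
open Finset
open scoped Classical

/-- If `G` is edge-colored with at least
`max_{P : |P| ≥ 3}{|E(P,G)| + t(|P|-2)} + 1` colors, then for every partition
`P` with `|P| ≥ 3`, `|c(cr(P,G))| ≥ t(|P|-2) + η(P,G) + ξ(P,G) + 1`, and for
every bipartition `P` with `|c(E(G))| > |E(P,G)|`,
`|c(cr(P,G))| ≥ η(P,G) + ξ(P,G) + 1`. -/
theorem stmt10 {V : Type} [Fintype V] (G : SimpleGraph V) (t : ℕ) (ht : 0 < t)
    (hV : 3 ≤ Fintype.card V) (c : Sym2 V → ℕ)
    (hc : maxNonCross3 G t + 1 ≤ (G.edgeFinset.image c).card) :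
    (∀ P : Finpartition (Finset.univ : Finset V), 3 ≤ P.parts.card →
      t * (P.parts.card - 2)
          + ((edgesNonCrossing G P).card - ((edgesNonCrossing G P).image c).card)
          + (((edgesNonCrossing G P).image c) ∩ ((edgesCrossing G P).image c)).card + 1
        ≤ ((edgesCrossing G P).image c).card) ∧
    (∀ P : Finpartition (Finset.univ : Finset V), P.parts.card = 2 →
      (edgesNonCrossing G P).card < (G.edgeFinset.image c).card →
      ((edgesNonCrossing G P).card - ((edgesNonCrossing G P).image c).card)
          + (((edgesNonCrossing G P).image c) ∩ ((edgesCrossing G P).image c)).card + 1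
        ≤ ((edgesCrossing G P).image c).card) := by
  have key : ∀ P : Finpartition (Finset.univ : Finset V),
      (G.edgeFinset.image c).card
          + (((edgesNonCrossing G P).image c) ∩ ((edgesCrossing G P).image c)).card
        = ((edgesNonCrossing G P).image c).card + ((edgesCrossing G P).image c).card := by
    intro P
    have h1 : edgesNonCrossing G P ∪ edgesCrossing G P = G.edgeFinset :=
      Finset.filter_union_filter_not_eq _ _
    have h2 : (G.edgeFinset.image c)
        = (edgesNonCrossing G P).image c ∪ (edgesCrossing G P).image c := by
      rw [← Finset.image_union, h1]
    rw [h2, Finset.card_union_add_card_inter]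
  have hNCle : ∀ P : Finpartition (Finset.univ : Finset V),
      ((edgesNonCrossing G P).image c).card ≤ (edgesNonCrossing G P).card :=
    fun P => Finset.card_image_le
  constructor
  · intro P hP
    have hmem : (edgesNonCrossing G P).card + t * (P.parts.card - 2) ≤ maxNonCross3 G t := by
      apply le_csSup
      · refine ⟨G.edgeFinset.card + t * Fintype.card V, ?_⟩
        rintro m ⟨Q, hQ, rfl⟩
        have h1 : (edgesNonCrossing G Q).card ≤ G.edgeFinset.card :=
          Finset.card_filter_le _ _
        have h2 : Q.parts.card - 2 ≤ Fintype.card V :=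
          le_trans (Nat.sub_le _ _) (le_trans Q.card_parts_le_card (by simp))
        have := Nat.mul_le_mul_left t h2
        omega
      · exact ⟨P, hP, rfl⟩
    have := key P; have := hNCle P
    omega
  · intro P hP hlt
    have := key P; have := hNCle P
    omega
end

section
/- Let G be an edge-colored finite simple graph on at least 3 vertices, t a positive integer, and let F₁, ..., F_t be edge-disjoint rainbow spanning forests of G such that Σ_{i=1}^{t} |E(F_i)| ≥ t - 1 + |c(∪_{i=1}^t F_i)| and every color appearing on an edge of some F_i appears on at least two edges of G. Let G' be the spanning subgraph of G obtained by removing all edges whose color appears in F₁ ∪ ... ∪ F_t. Then for every partition P of V(G) that satisfies either (a) |P| ≥ 3 and the coloring uses at least max_{Q: |Q|≥3}{ |E(Q,G)| + t(|Q|-2) } + 1 colors, or (b) |P| = 2 and |c(E(G))| > |E(P,G)| (with the same hypothesis on the total number of colors), we have |c(cr(P,G'))| + Σ_{i=1}^{t} |cr(P,F_i)| ≥ t(|P| - 1). -/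
open Finset
open scoped Classical

/-- Suppose `F₁,…,F_t` are edge-disjoint rainbow spanning
forests with `∑ᵢ|E(Fᵢ)| ≥ t - 1 + |c(∪ᵢFᵢ)|`, each color appearing in some `Fᵢ`
appears on at least two edges of `G`, and the coloring uses at least
`max_{Q : |Q| ≥ 3}{|E(Q,G)| + t(|Q|-2)} + 1` colors. Then every partition `P`
with `|P| ≥ 3`, or with `|P| = 2` and `|c(E(G))| > |E(P,G)|`, satisfies
`|c(cr(P,G'))| + ∑ᵢ|cr(P,Fᵢ)| ≥ t(|P|-1)`, where `G'` is obtained from `G` by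
removing all edges whose color appears in some `Fᵢ`. -/
theorem stmt11 {V : Type} [Fintype V] (G : SimpleGraph V) (c : Sym2 V → ℕ)
    (t : ℕ) (ht : 0 < t) (hV : 3 ≤ Fintype.card V)
    (F : Fin t → SimpleGraph V)
    (hFsub : ∀ i, F i ≤ G) (hFacyc : ∀ i, (F i).IsAcyclic)
    (hFrb : ∀ i, Set.InjOn c ((F i).edgeSet))
    (hFdisj : ∀ i j, i ≠ j → Disjoint ((F i).edgeSet) ((F j).edgeSet))
    (hsize : t - 1 + ((Finset.univ.biUnion (fun i => (F i).edgeFinset)).image c).card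
      ≤ ∑ i, (F i).edgeFinset.card)
    (htwice : ∀ i, ∀ e ∈ (F i).edgeSet, ∃ f ∈ G.edgeSet, f ≠ e ∧ c f = c e)
    (hc : maxNonCross3 G t + 1 ≤ (G.edgeFinset.image c).card) :
    ∀ P : Finpartition (Finset.univ : Finset V),
      (3 ≤ P.parts.card ∨
        (P.parts.card = 2 ∧ (edgesNonCrossing G P).card < (G.edgeFinset.image c).card)) →
      t * (P.parts.card - 1) ≤
        ((edgesCrossing
            (G.deleteEdges {e | ∃ i, ∃ f ∈ (F i).edgeSet, c f = c e}) P).image c).card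
          + ∑ i, (edgesCrossing (F i) P).card := by
  classical
  intro P hP
  set S : Set (Sym2 V) := {e | ∃ i, ∃ f ∈ (F i).edgeSet, c f = c e} with hS
  set G' := G.deleteEdges S with hG'
  set NC := edgesNonCrossing G P with hNC
  set U : Finset (Sym2 V) :=
    Finset.univ.biUnion (fun i => edgesNonCrossing (F i) P) with hU
  set CF := ((Finset.univ.biUnion (fun i => (F i).edgeFinset)).image c) with hCF
  -- each forest's edges split into crossing and noncrossing
  have hEi : ∀ i : Fin t, (edgesNonCrossing (F i) P).card + (edgesCrossing (F i) P).card
      = (F i).edgeFinset.card := by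
    intro i
    exact Finset.card_filter_add_card_filter_not _
  -- U ⊆ NC
  have hUsub : U ⊆ NC := by
    intro e he
    obtain ⟨i, -, hi⟩ := Finset.mem_biUnion.mp he
    obtain ⟨h1, h2⟩ := Finset.mem_filter.mp hi
    exact Finset.mem_filter.mpr ⟨(SimpleGraph.edgeFinset_mono (hFsub i)) h1, h2⟩
  -- U has card equal to the sum
  have hUcard : U.card = ∑ i, (edgesNonCrossing (F i) P).card := by
    rw [hU]
    refine Finset.card_biUnion ?_
    intro i _ j _ hij
    have hd : Disjoint ((F i).edgeFinset) ((F j).edgeFinset) := by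
      rw [SimpleGraph.edgeFinset, SimpleGraph.edgeFinset, Set.disjoint_toFinset]
      exact hFdisj i j hij
    exact hd.mono (Finset.filter_subset _ _) (Finset.filter_subset _ _)
  -- the key subset relation on colors
  have hsubset : G.edgeFinset.image c ⊆
      ((edgesCrossing G' P).image c ∪ CF) ∪ (NC \ U).image c := by
    intro x hx
    obtain ⟨e, he, rfl⟩ := Finset.mem_image.mp hx
    by_cases hF : c e ∈ CF
    · exact Finset.mem_union_left _ (Finset.mem_union_right _ hF)
    by_cases hcr : ∃ p ∈ P.parts, ∀ v ∈ e, v ∈ p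
    · refine Finset.mem_union_right _ (Finset.mem_image.mpr ⟨e, ?_, rfl⟩)
      refine Finset.mem_sdiff.mpr ⟨Finset.mem_filter.mpr ⟨he, hcr⟩, ?_⟩
      intro heU
      obtain ⟨i, -, hi⟩ := Finset.mem_biUnion.mp heU
      exact hF (Finset.mem_image.mpr ⟨e,
        Finset.mem_biUnion.mpr ⟨i, Finset.mem_univ i, (Finset.mem_filter.mp hi).1⟩, rfl⟩)
    · refine Finset.mem_union_left _ (Finset.mem_union_left _
        (Finset.mem_image.mpr ⟨e, ?_, rfl⟩))
      refine Finset.mem_filter.mpr ⟨?_, hcr⟩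
      convert SimpleGraph.mem_edgeFinset.mpr ?_
      rw [hG', SimpleGraph.edgeSet_deleteEdges]
      refine ⟨SimpleGraph.mem_edgeFinset.mp he, ?_⟩
      intro heS
      obtain ⟨i, f, hf, hcf⟩ := heS
      exact hF (Finset.mem_image.mpr ⟨f,
        Finset.mem_biUnion.mpr ⟨i, Finset.mem_univ i, SimpleGraph.mem_edgeFinset.mpr hf⟩, hcf⟩)
  -- card bound
  have hcard1 : (G.edgeFinset.image c).card ≤
      ((edgesCrossing G' P).image c).card + CF.card + (NC.card - U.card) := by
    calc (G.edgeFinset.image c).card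
        ≤ (((edgesCrossing G' P).image c ∪ CF) ∪ (NC \ U).image c).card :=
          Finset.card_le_card hsubset
      _ ≤ ((edgesCrossing G' P).image c ∪ CF).card + ((NC \ U).image c).card :=
          Finset.card_union_le _ _
      _ ≤ (((edgesCrossing G' P).image c).card + CF.card) + ((NC \ U).image c).card :=
          Nat.add_le_add_right (Finset.card_union_le _ _) _
      _ ≤ ((edgesCrossing G' P).image c).card + CF.card + (NC \ U).card :=
          Nat.add_le_add_left (Finset.card_image_le) _
      _ = ((edgesCrossing G' P).image c).card + CF.card + (NC.card - U.card) := by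
          rw [Finset.card_sdiff_of_subset hUsub]
  have hUle : U.card ≤ NC.card := Finset.card_le_card hUsub
  have hEsum : ∑ i, (edgesNonCrossing (F i) P).card + ∑ i, (edgesCrossing (F i) P).card
      = ∑ i, (F i).edgeFinset.card := by
    rw [← Finset.sum_add_distrib]
    exact Finset.sum_congr rfl fun i _ => hEi i
  -- key linear inequality
  have hkey : (G.edgeFinset.image c).card + (t - 1) ≤
      ((edgesCrossing G' P).image c).card + ∑ i, (edgesCrossing (F i) P).card + NC.card := by
    omega
  rcases hP with h3 | ⟨h2, hlt⟩
  · -- |P| ≥ 3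
    have hbdd : BddAbove {m | ∃ Q : Finpartition (Finset.univ : Finset V),
        3 ≤ Q.parts.card ∧ m = (edgesNonCrossing G Q).card + t * (Q.parts.card - 2)} := by
      refine ⟨G.edgeFinset.card + t * Fintype.card V, ?_⟩
      rintro m ⟨Q, hQ, rfl⟩
      have h1 : (edgesNonCrossing G Q).card ≤ G.edgeFinset.card :=
        Finset.card_le_card (Finset.filter_subset _ _)
      have h2' : Q.parts.card - 2 ≤ Fintype.card V := by
        have := Q.card_parts_le_card
        simp only [Finset.card_univ] at this
        omega
      exact Nat.add_le_add h1 (Nat.mul_le_mul_left t h2')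
    have hmem : NC.card + t * (P.parts.card - 2) ∈ {m | ∃ Q : Finpartition (Finset.univ : Finset V),
        3 ≤ Q.parts.card ∧ m = (edgesNonCrossing G Q).card + t * (Q.parts.card - 2)} :=
      ⟨P, h3, rfl⟩
    have hmax : NC.card + t * (P.parts.card - 2) ≤ maxNonCross3 G t :=
      le_csSup hbdd hmem
    have hst : t * (P.parts.card - 1) = t * (P.parts.card - 2) + t := by
      have h : P.parts.card - 1 = (P.parts.card - 2) + 1 := by omega
      rw [h, Nat.mul_succ]
    rw [hst]
    have hcc : NC.card + t * (P.parts.card - 2) + 1 ≤ (G.edgeFinset.image c).card :=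
      le_trans (Nat.add_le_add_right hmax 1) hc
    set a := t * (P.parts.card - 2) with ha
    omega
  · -- |P| = 2
    rw [h2]
    omega
end

section
/- Let G be a finite simple graph on at least 3 vertices, t a positive integer, and suppose G is edge-colored with exactly max_{P: |P|≥3}{ |E(P,G)| + t(|P|-2) } + 1 colors and contains no t pairwise edge-disjoint rainbow spanning trees. If there exist two distinct bipartitions P₁ and P₂ of V(G) (each with exactly 2 parts) with |cr(P₁,G)| = |cr(P₂,G)| = t, then the common refinement P₁ ∩ P₂ (which has at least 3 parts) satisfies |cr(P₁∩P₂, G)| ≤ t(|P₁∩P₂| - 1). Consequently, under the additional hypothesis that every partition P with |P| ≥ 3 satisfies |cr(P,G)| ≥ t(|P|-1)+1, at most one bipartition P of V(G) can have |cr(P,G)| = t. -/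
open Finset
open scoped Classical

lemma finpartition_eq_of_le_of_card_le {α : Type*} [DecidableEq α] {s : Finset α}
    {P Q : Finpartition s} (hle : Q ≤ P) (hcard : Q.parts.card ≤ P.parts.card) :
    Q = P := by
  have hP : ∀ q ∈ Q.parts, ∃ p ∈ P.parts, q ≤ p := fun q hq => hle hq
  choose f hf hf' using hP
  have hsurj : ∀ p ∈ P.parts, ∃ q, ∃ hq : q ∈ Q.parts, f q hq = p := by
    intro p hp
    obtain ⟨q, hq, hqp⟩ := Finpartition.exists_le_of_le hle hp
    refine ⟨q, hq, ?_⟩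
    obtain ⟨x, hx⟩ := Finset.nonempty_iff_ne_empty.2 (Q.ne_bot hq)
    exact P.eq_of_mem_parts (hf q hq) hp (hf' q hq hx) (hqp hx)
  have himage : P.parts = Q.parts.attach.image (fun q => f q.1 q.2) := by
    apply Finset.Subset.antisymm
    · intro p hp
      obtain ⟨q, hq, hfq⟩ := hsurj p hp
      exact Finset.mem_image.2 ⟨⟨q, hq⟩, Finset.mem_attach _ _, hfq⟩
    · intro p hp
      obtain ⟨⟨q, hq⟩, _, rfl⟩ := Finset.mem_image.1 hp
      exact hf q hq
  have hinjOn : Set.InjOn (fun q : {x // x ∈ Q.parts} => f q.1 q.2) Q.parts.attach := by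
    rw [← Finset.card_image_iff]
    have h1 : (Q.parts.attach.image (fun q => f q.1 q.2)).card ≤ Q.parts.attach.card :=
      Finset.card_image_le
    have h2 : Q.parts.attach.card ≤ (Q.parts.attach.image (fun q => f q.1 q.2)).card := by
      rw [Finset.card_attach, ← himage]; exact hcard
    omega
  have hinj : ∀ q₁ (h₁ : q₁ ∈ Q.parts) q₂ (h₂ : q₂ ∈ Q.parts), f q₁ h₁ = f q₂ h₂ → q₁ = q₂ := by
    intro q₁ h₁ q₂ h₂ heq
    exact Subtype.ext_iff.1 (hinjOn (Finset.mem_coe.2 (Finset.mem_attach _ ⟨q₁, h₁⟩))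
      (Finset.mem_coe.2 (Finset.mem_attach _ ⟨q₂, h₂⟩)) heq)
  have hqeq : ∀ q (hq : q ∈ Q.parts), q = f q hq := by
    intro q hq
    apply Finset.Subset.antisymm (hf' q hq)
    intro x hx
    have hxs : x ∈ s := (P.le (hf q hq)) hx
    obtain ⟨q', hq', hxq'⟩ := Q.exists_mem hxs
    have heq : f q' hq' = f q hq :=
      P.eq_of_mem_parts (hf q' hq') (hf q hq) (hf' q' hq' hxq') hx
    have := hinj q' hq' q hq heq
    subst this
    exact hxq'
  apply Finpartition.ext
  ext p
  constructor
  · intro hp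
    have := hf p hp
    rwa [← hqeq p hp] at this
  · intro hp
    obtain ⟨q, hq, rfl⟩ := hsurj p hp
    rw [← hqeq q hq]; exact hq

lemma crossing_inf_subset {V : Type} [Fintype V] (G : SimpleGraph V)
    (P₁ P₂ : Finpartition (Finset.univ : Finset V)) :
    edgesCrossing G (P₁ ⊓ P₂) ⊆ edgesCrossing G P₁ ∪ edgesCrossing G P₂ := by
  intro e he
  rw [edgesCrossing, Finset.mem_filter] at he
  obtain ⟨heG, hne⟩ := he
  by_contra h
  rw [Finset.mem_union] at h
  push_neg at h
  obtain ⟨h1, h2⟩ := h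
  rw [edgesCrossing, Finset.mem_filter] at h1 h2
  push_neg at h1 h2
  obtain ⟨p₁, hp₁, hep₁⟩ := h1 heG
  obtain ⟨p₂, hp₂, hep₂⟩ := h2 heG
  apply hne
  refine ⟨p₁ ∩ p₂, ?_, fun v hv => Finset.mem_inter.2 ⟨hep₁ v hv, hep₂ v hv⟩⟩
  rw [Finpartition.parts_inf]
  induction e using Sym2.ind with
  | _ u w =>
    refine Finset.mem_erase.2 ⟨?_, Finset.mem_image.2 ⟨(p₁, p₂), Finset.mem_product.2 ⟨hp₁, hp₂⟩, rfl⟩⟩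
    have hu : u ∈ p₁ ∩ p₂ := Finset.mem_inter.2
      ⟨hep₁ u (Sym2.mem_mk_left u w), hep₂ u (Sym2.mem_mk_left u w)⟩
    intro hbot
    rw [hbot] at hu
    exact absurd hu (Finset.notMem_empty u)

/-- Suppose `G` is edge-colored with exactly
`max_{P : |P| ≥ 3}{|E(P,G)| + t(|P|-2)} + 1` colors and has no `t` pairwise
edge-disjoint rainbow spanning trees. If `P₁ ≠ P₂` are bipartitions of `V(G)`
with `|cr(P₁,G)| = |cr(P₂,G)| = t`, then their common refinement `P₁ ⊓ P₂` has
at least `3` parts and satisfies `|cr(P₁⊓P₂,G)| ≤ t(|P₁⊓P₂|-1)`. Consequently,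
if moreover every partition `P` with `|P| ≥ 3` satisfies
`|cr(P,G)| ≥ t(|P|-1)+1`, then at most one bipartition `P` has `|cr(P,G)| = t`. -/
theorem stmt14 {V : Type} [Fintype V] (G : SimpleGraph V) (t : ℕ) (ht : 0 < t)
    (hV : 3 ≤ Fintype.card V) (c : Sym2 V → ℕ)
    (hc : (G.edgeFinset.image c).card = maxNonCross3 G t + 1)
    (hno : ¬ HasRainbowSpanningTrees G c t) :
    (∀ P₁ P₂ : Finpartition (Finset.univ : Finset V),
      P₁.parts.card = 2 → P₂.parts.card = 2 → P₁ ≠ P₂ →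
      (edgesCrossing G P₁).card = t → (edgesCrossing G P₂).card = t →
      3 ≤ (P₁ ⊓ P₂).parts.card ∧
        (edgesCrossing G (P₁ ⊓ P₂)).card ≤ t * ((P₁ ⊓ P₂).parts.card - 1)) ∧
    ((∀ P : Finpartition (Finset.univ : Finset V), 3 ≤ P.parts.card →
        t * (P.parts.card - 1) + 1 ≤ (edgesCrossing G P).card) →
      ∀ P₁ P₂ : Finpartition (Finset.univ : Finset V),
        P₁.parts.card = 2 → P₂.parts.card = 2 →
        (edgesCrossing G P₁).card = t → (edgesCrossing G P₂).card = t → P₁ = P₂) := by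
  have main : ∀ P₁ P₂ : Finpartition (Finset.univ : Finset V),
      P₁.parts.card = 2 → P₂.parts.card = 2 → P₁ ≠ P₂ →
      (edgesCrossing G P₁).card = t → (edgesCrossing G P₂).card = t →
      3 ≤ (P₁ ⊓ P₂).parts.card ∧
        (edgesCrossing G (P₁ ⊓ P₂)).card ≤ t * ((P₁ ⊓ P₂).parts.card - 1) := by
    intro P₁ P₂ h1 h2 hne hc1 hc2
    have hle1 : P₁ ⊓ P₂ ≤ P₁ := inf_le_left
    have hle2 : P₁ ⊓ P₂ ≤ P₂ := inf_le_right
    have hge : 2 ≤ (P₁ ⊓ P₂).parts.card := h1 ▸ Finpartition.card_mono hle1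
    have h3 : 3 ≤ (P₁ ⊓ P₂).parts.card := by
      by_contra hlt
      have hcard1 : (P₁ ⊓ P₂).parts.card ≤ P₁.parts.card := by omega
      have hcard2 : (P₁ ⊓ P₂).parts.card ≤ P₂.parts.card := by omega
      have e1 := finpartition_eq_of_le_of_card_le hle1 hcard1
      have e2 := finpartition_eq_of_le_of_card_le hle2 hcard2
      exact hne (e1 ▸ e2)
    refine ⟨h3, ?_⟩
    have hsub := crossing_inf_subset G P₁ P₂
    have hcard : (edgesCrossing G (P₁ ⊓ P₂)).card ≤
        (edgesCrossing G P₁).card + (edgesCrossing G P₂).card :=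
      le_trans (Finset.card_le_card hsub) (Finset.card_union_le _ _)
    rw [hc1, hc2] at hcard
    have : 2 * t ≤ t * ((P₁ ⊓ P₂).parts.card - 1) := by
      have : 2 ≤ (P₁ ⊓ P₂).parts.card - 1 := by omega
      calc 2 * t = t * 2 := by ring
        _ ≤ t * ((P₁ ⊓ P₂).parts.card - 1) := Nat.mul_le_mul_left t this
    omega
  refine ⟨main, ?_⟩
  intro h P₁ P₂ h1 h2 hc1 hc2
  by_contra hne
  obtain ⟨h3, hle⟩ := main P₁ P₂ h1 h2 hne hc1 hc2
  have := h (P₁ ⊓ P₂) h3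
  omega
end

section
/- Let G = K_{n₁,n₂,...,n_r} be a complete r-partite graph with n₁ ≥ n₂ ≥ ... ≥ n_r ≥ 1 and n = n₁ + ... + n_r vertices, and for 2 ≤ s ≤ n define f_G(s) as the maximum of |E(P,G)| over all partitions P of V(G) into exactly s nonempty parts. Then f_G is concave upward: for all 2 ≤ s ≤ n-2, f_G(s) + f_G(s+2) ≥ 2 f_G(s+1). -/
open Finset
open scoped Classical

section Key
variable {V : Type} [Fintype V]

private lemma bddAux (G : SimpleGraph V) (k : ℕ) :
    BddAbove {m | ∃ P : Finpartition (Finset.univ : Finset V), P.parts.card = k ∧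
      m = (edgesNonCrossing G P).card} := by
  refine ⟨G.edgeFinset.card, ?_⟩
  rintro m ⟨P, -, rfl⟩
  exact Finset.card_le_card (Finset.filter_subset _ _)

private lemma le_fMaxAux (G : SimpleGraph V) {k : ℕ} (P : Finpartition (Finset.univ : Finset V))
    (h : P.parts.card = k) : (edgesNonCrossing G P).card ≤ fMax G k :=
  le_csSup (bddAux G k) ⟨P, h, rfl⟩

private lemma keyAux (G : SimpleGraph V)
    (hmin : ∀ t : Finset V, t.Nonempty → ∃ v ∈ t, ∀ u : V,
      (t.filter (G.Adj v)).card ≤ (t.filter (G.Adj u)).card)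
    (k : ℕ) (hk : 2 ≤ k) (hn : k + 2 ≤ Fintype.card V) :
    2 * fMax G (k + 1) ≤ fMax G k + fMax G (k + 2) := by
  by_cases hne : {m | ∃ P : Finpartition (Finset.univ : Finset V), P.parts.card = k + 1 ∧
      m = (edgesNonCrossing G P).card}.Nonempty
  swap
  · rw [fMax, Set.not_nonempty_iff_eq_empty.1 hne, csSup_empty]
    exact Nat.zero_le _
  obtain ⟨P, hPcard, hPval⟩ := Nat.sSup_mem hne (bddAux G (k + 1))
  -- find a part `t` with at least two elements
  have hsum : ∑ q ∈ P.parts, q.card = Fintype.card V := by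
    rw [P.sum_card_parts, Finset.card_univ]
  have ht : ∃ t ∈ P.parts, 2 ≤ t.card := by
    by_contra h
    push_neg at h
    have : ∑ q ∈ P.parts, q.card ≤ ∑ q ∈ P.parts, 1 :=
      Finset.sum_le_sum (fun q hq => Nat.lt_succ_iff.mp (h q hq))
    simp only [Finset.sum_const, smul_eq_mul, mul_one] at this
    omega
  obtain ⟨t, htP, ht2⟩ := ht
  -- find another part `p`
  have hpe : (P.parts.erase t).Nonempty := by
    rw [← Finset.card_pos, Finset.card_erase_of_mem htP]
    omega
  obtain ⟨p, hp⟩ := hpe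
  obtain ⟨hpt, hpP⟩ := Finset.mem_erase.mp hp
  have hpne : p.Nonempty := P.nonempty_of_mem_parts hpP
  obtain ⟨u₀, hu₀⟩ := hpne
  have htne : t.Nonempty := Finset.card_pos.mp (by omega)
  obtain ⟨v, hvt, hvmin⟩ := hmin t htne
  have hdisj := P.disjoint
  -- edge sets
  set A := edgesNonCrossing G P with hA
  set Nv := t.filter (G.Adj v) with hNv
  set Y := Nv.image (fun u => s(v, u)) with hY
  set Nu := t.filter (G.Adj u₀) with hNu
  set X := Nu.image (fun u => s(u₀, u)) with hX
  have hYcard : Y.card = Nv.card := by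
    apply Finset.card_image_of_injOn
    intro a ha b hb hab
    have ha' := (Finset.mem_filter.mp ha).2
    have hb' := (Finset.mem_filter.mp hb).2
    rcases Sym2.eq_iff.mp hab with ⟨-, h⟩ | ⟨h1, h2⟩
    · exact h
    · exact absurd h2.symm ha'.ne
  have hXcard : X.card = Nu.card := by
    apply Finset.card_image_of_injOn
    intro a ha b hb hab
    have ha' := (Finset.mem_filter.mp ha).2
    have hb' := (Finset.mem_filter.mp hb).2
    rcases Sym2.eq_iff.mp hab with ⟨-, h⟩ | ⟨h1, h2⟩
    · exact h
    · exact absurd h2.symm ha'.ne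
  have hYX : Y.card ≤ X.card := by
    rw [hYcard, hXcard]; exact hvmin u₀
  -- the merged partition Q
  have hrestQ : ∀ q ∈ (P.parts.erase p).erase t, q ∈ P.parts ∧ q ≠ p ∧ q ≠ t := by
    intro q hq
    obtain ⟨hq1, hq2⟩ := Finset.mem_erase.mp hq
    obtain ⟨hq3, hq4⟩ := Finset.mem_erase.mp hq2
    exact ⟨hq4, hq3, hq1⟩
  have hPsplit : P.parts = insert p (insert t ((P.parts.erase p).erase t)) := by
    rw [Finset.insert_erase (Finset.mem_erase.mpr ⟨fun h => hpt h.symm, htP⟩),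
      Finset.insert_erase hpP]
  have hQsup : (insert (p ∪ t) ((P.parts.erase p).erase t)).sup id = Finset.univ := by
    have h := P.sup_parts
    conv_rhs => rw [← h, hPsplit]
    rw [Finset.sup_insert, Finset.sup_insert, Finset.sup_insert]
    simp only [id_eq, Finset.sup_eq_union]
    rw [Finset.union_assoc]
  have hQdisj : (↑(insert (p ∪ t) ((P.parts.erase p).erase t)) :
      Set (Finset V)).PairwiseDisjoint id := by
    intro a ha b hb hab
    simp only [Finset.coe_insert, Set.mem_insert_iff, Finset.mem_coe] at ha hb
    rcases ha with rfl | ha <;> rcases hb with rfl | hb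
    · exact absurd rfl hab
    · obtain ⟨hb1, hb2, hb3⟩ := hrestQ _ hb
      simp only [Function.onFun, id_eq, Finset.disjoint_union_left]
      exact ⟨hdisj hpP hb1 (Ne.symm hb2), hdisj htP hb1 (Ne.symm hb3)⟩
    · obtain ⟨ha1, ha2, ha3⟩ := hrestQ _ ha
      simp only [Function.onFun, id_eq, Finset.disjoint_union_right]
      exact ⟨hdisj ha1 hpP ha2, hdisj ha1 htP ha3⟩
    · exact hdisj (hrestQ _ ha).1 (hrestQ _ hb).1 hab
  have hQbot : (⊥ : Finset V) ∉ insert (p ∪ t) ((P.parts.erase p).erase t) := by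
    intro h
    rcases Finset.mem_insert.mp h with h | h
    · have : u₀ ∈ (⊥ : Finset V) := h ▸ Finset.mem_union_left _ hu₀
      exact absurd this (Finset.notMem_empty u₀)
    · exact P.bot_notMem (Finset.mem_of_mem_erase (Finset.mem_of_mem_erase h))
  set Q : Finpartition (Finset.univ : Finset V) :=
    ⟨insert (p ∪ t) ((P.parts.erase p).erase t), Finset.supIndep_iff_pairwiseDisjoint.mpr hQdisj,
      hQsup, hQbot⟩ with hQdef
  have hputns : p ∪ t ∉ (P.parts.erase p).erase t := by
    intro h
    obtain ⟨hq1, hq2, hq3⟩ := hrestQ _ h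
    exact hq2 (P.eq_of_mem_parts hq1 hpP (Finset.mem_union_left _ hu₀) hu₀)
  have hQcard : Q.parts.card = k := by
    show (insert (p ∪ t) ((P.parts.erase p).erase t)).card = k
    rw [Finset.card_insert_of_notMem hputns,
      Finset.card_erase_of_mem (Finset.mem_erase.mpr ⟨fun h => hpt h.symm, htP⟩),
      Finset.card_erase_of_mem hpP, hPcard]
    omega
  -- the refined partition R
  have hven : (t.erase v).Nonempty := by
    rw [← Finset.card_pos, Finset.card_erase_of_mem hvt]
    omega
  have hrestR : ∀ q ∈ P.parts.erase t, q ∈ P.parts ∧ q ≠ t := by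
    intro q hq
    obtain ⟨hq1, hq2⟩ := Finset.mem_erase.mp hq
    exact ⟨hq2, hq1⟩
  have hsing : ({v} : Finset V) ∉ insert (t.erase v) (P.parts.erase t) := by
    intro h
    rcases Finset.mem_insert.mp h with h | h
    · have : v ∈ t.erase v := h ▸ Finset.mem_singleton_self v
      exact (Finset.notMem_erase v t) this
    · obtain ⟨hq1, hq2⟩ := hrestR _ h
      exact hq2 (P.eq_of_mem_parts hq1 htP (Finset.mem_singleton_self v) hvt)
  have herasens : t.erase v ∉ P.parts.erase t := by
    intro h
    obtain ⟨hq1, hq2⟩ := hrestR _ h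
    obtain ⟨w, hw⟩ := hven
    exact hq2 (P.eq_of_mem_parts hq1 htP hw (Finset.mem_of_mem_erase hw))
  have hPsplit' : P.parts = insert t (P.parts.erase t) := (Finset.insert_erase htP).symm
  have hRsup : (insert ({v} : Finset V) (insert (t.erase v) (P.parts.erase t))).sup id
      = Finset.univ := by
    have h := P.sup_parts
    conv_rhs => rw [← h, hPsplit']
    rw [Finset.sup_insert, Finset.sup_insert, Finset.sup_insert]
    simp only [id_eq, Finset.sup_eq_union]
    rw [← Finset.union_assoc]
    congr 1
    rw [← Finset.insert_eq, Finset.insert_erase hvt]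
  have hRdisj : (↑(insert ({v} : Finset V) (insert (t.erase v) (P.parts.erase t))) :
      Set (Finset V)).PairwiseDisjoint id := by
    intro a ha b hb hab
    simp only [Finset.coe_insert, Set.mem_insert_iff, Finset.mem_coe] at ha hb
    have sing_er : Disjoint ({v} : Finset V) (t.erase v) := by
      simp [Finset.disjoint_singleton_left]
    have sing_q : ∀ q ∈ P.parts.erase t, Disjoint ({v} : Finset V) q := by
      intro q hq
      obtain ⟨hq1, hq2⟩ := hrestR _ hq
      rw [Finset.disjoint_singleton_left]
      exact fun hvq => hq2 (P.eq_of_mem_parts hq1 htP hvq hvt)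
    have er_q : ∀ q ∈ P.parts.erase t, Disjoint (t.erase v) q := by
      intro q hq
      obtain ⟨hq1, hq2⟩ := hrestR _ hq
      exact Finset.disjoint_of_subset_left (Finset.erase_subset v t)
        (hdisj htP hq1 (Ne.symm hq2))
    rcases ha with rfl | rfl | ha <;> rcases hb with rfl | rfl | hb
    · exact absurd rfl hab
    · exact sing_er
    · exact sing_q _ hb
    · exact sing_er.symm
    · exact absurd rfl hab
    · exact er_q _ hb
    · exact (sing_q _ ha).symm
    · exact (er_q _ ha).symm
    · exact hdisj (hrestR _ ha).1 (hrestR _ hb).1 hab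
  have hRbot : (⊥ : Finset V) ∉ insert ({v} : Finset V) (insert (t.erase v) (P.parts.erase t)) := by
    intro h
    rcases Finset.mem_insert.mp h with h | h
    · rw [Finset.bot_eq_empty] at h
      exact Finset.singleton_ne_empty v h.symm
    rcases Finset.mem_insert.mp h with h | h
    · obtain ⟨w, hw⟩ := hven
      rw [Finset.bot_eq_empty] at h
      rw [← h] at hw
      exact Finset.notMem_empty w hw
    · exact P.bot_notMem (Finset.mem_of_mem_erase h)
  set R : Finpartition (Finset.univ : Finset V) :=
    ⟨insert ({v} : Finset V) (insert (t.erase v) (P.parts.erase t)),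
      Finset.supIndep_iff_pairwiseDisjoint.mpr hRdisj, hRsup, hRbot⟩ with hRdef
  have hRcard : R.parts.card = k + 2 := by
    show (insert ({v} : Finset V) (insert (t.erase v) (P.parts.erase t))).card = k + 2
    rw [Finset.card_insert_of_notMem hsing, Finset.card_insert_of_notMem herasens,
      Finset.card_erase_of_mem htP, hPcard]
    omega
  -- counting facts
  set B := edgesNonCrossing G Q with hB
  set C := edgesNonCrossing G R with hC
  have hAB : A ⊆ B := by
    intro e he
    obtain ⟨he1, q, hq, hqe⟩ := Finset.mem_filter.mp he
    refine Finset.mem_filter.mpr ⟨he1, ?_⟩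
    by_cases h1 : q = p
    · exact ⟨p ∪ t, Finset.mem_insert_self _ _,
        fun w hw => Finset.mem_union_left _ (h1 ▸ hqe w hw)⟩
    by_cases h2 : q = t
    · exact ⟨p ∪ t, Finset.mem_insert_self _ _,
        fun w hw => Finset.mem_union_right _ (h2 ▸ hqe w hw)⟩
    · exact ⟨q, Finset.mem_insert_of_mem
        (Finset.mem_erase.mpr ⟨h2, Finset.mem_erase.mpr ⟨h1, hq⟩⟩), hqe⟩
  have hXB : X ⊆ B := by
    intro e he
    obtain ⟨u, hu, rfl⟩ := Finset.mem_image.mp he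
    obtain ⟨hut, hadj⟩ := Finset.mem_filter.mp hu
    refine Finset.mem_filter.mpr ⟨SimpleGraph.mem_edgeFinset.mpr hadj, p ∪ t,
      Finset.mem_insert_self _ _, ?_⟩
    intro w hw
    rcases Sym2.mem_iff.mp hw with rfl | rfl
    · exact Finset.mem_union_left _ hu₀
    · exact Finset.mem_union_right _ hut
  have hAX : Disjoint A X := by
    rw [Finset.disjoint_right]
    intro e he hea
    obtain ⟨u, hu, rfl⟩ := Finset.mem_image.mp he
    obtain ⟨hut, hadj⟩ := Finset.mem_filter.mp hu
    obtain ⟨-, q, hq, hqe⟩ := Finset.mem_filter.mp hea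
    have h1 : u₀ ∈ q := hqe u₀ (Sym2.mem_mk_left _ _)
    have h2 : u ∈ q := hqe u (Sym2.mem_mk_right _ _)
    have e1 : q = p := P.eq_of_mem_parts hq hpP h1 hu₀
    have e2 : q = t := P.eq_of_mem_parts hq htP h2 hut
    exact hpt (e1 ▸ e2)
  have hYA : Y ⊆ A := by
    intro e he
    obtain ⟨u, hu, rfl⟩ := Finset.mem_image.mp he
    obtain ⟨hut, hadj⟩ := Finset.mem_filter.mp hu
    refine Finset.mem_filter.mpr ⟨SimpleGraph.mem_edgeFinset.mpr hadj, t, htP, ?_⟩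
    intro w hw
    rcases Sym2.mem_iff.mp hw with rfl | rfl
    · exact hvt
    · exact hut
  have hAYC : A \ Y ⊆ C := by
    intro e he
    obtain ⟨hea, hey⟩ := Finset.mem_sdiff.mp he
    obtain ⟨he1, q, hq, hqe⟩ := Finset.mem_filter.mp hea
    refine Finset.mem_filter.mpr ⟨he1, ?_⟩
    by_cases h2 : q = t
    swap
    · exact ⟨q, Finset.mem_insert_of_mem (Finset.mem_insert_of_mem
        (Finset.mem_erase.mpr ⟨h2, hq⟩)), hqe⟩
    subst h2
    induction e using Sym2.ind with
    | _ a b =>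
      have hadj : G.Adj a b := SimpleGraph.mem_edgeFinset.mp he1
      have hat : a ∈ q := hqe a (Sym2.mem_mk_left _ _)
      have hbt : b ∈ q := hqe b (Sym2.mem_mk_right _ _)
      have hav : a ≠ v := by
        rintro rfl
        exact hey (Finset.mem_image.mpr ⟨b, Finset.mem_filter.mpr ⟨hbt, hadj⟩, rfl⟩)
      have hbv : b ≠ v := by
        rintro rfl
        refine hey (Finset.mem_image.mpr ⟨a, Finset.mem_filter.mpr ⟨hat, hadj.symm⟩, ?_⟩)
        exact Sym2.eq_swap
      refine ⟨q.erase v, Finset.mem_insert_of_mem (Finset.mem_insert_self _ _), ?_⟩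
      intro w hw
      rcases Sym2.mem_iff.mp hw with rfl | rfl
      · exact Finset.mem_erase.mpr ⟨hav, hat⟩
      · exact Finset.mem_erase.mpr ⟨hbv, hbt⟩
  -- finish
  have f1 : A.card + X.card ≤ B.card := by
    rw [← Finset.card_union_of_disjoint hAX]
    exact Finset.card_le_card (Finset.union_subset hAB hXB)
  have f2 : A.card - Y.card ≤ C.card := by
    rw [← Finset.card_sdiff_of_subset hYA]
    exact Finset.card_le_card hAYC
  have f3 : Y.card ≤ A.card := Finset.card_le_card hYA
  have f4 : B.card ≤ fMax G k := le_fMaxAux G Q hQcard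
  have f5 : C.card ≤ fMax G (k + 2) := le_fMaxAux G R hRcard
  have hPval' : fMax G (k + 1) = A.card := hPval
  rw [hPval']
  omega

end Key

/-- For a complete `r`-partite graph `G = K_{n₁,…,n_r}` with
`n₁ ≥ ⋯ ≥ n_r ≥ 1` and `n = n₁ + ⋯ + n_r` vertices, the function
`f_G(s) = max_{|P| = s} |E(P,G)|` is concave upward:
`f_G(s) + f_G(s+2) ≥ 2 f_G(s+1)` for all `2 ≤ s ≤ n - 2`. -/
theorem stmt15 (r : ℕ) (hr : 0 < r) (n : ℕ → ℕ)
    (hpos : ∀ i < r, 0 < n i)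
    (hmono : ∀ i j, i ≤ j → j < r → n j ≤ n i) :
    ∀ s, 2 ≤ s → s ≤ (∑ i ∈ Finset.range r, n i) - 2 →
      2 * fMax (SimpleGraph.completeMultipartiteGraph (fun i : Fin r => Fin (n i))) (s + 1) ≤
        fMax (SimpleGraph.completeMultipartiteGraph (fun i : Fin r => Fin (n i))) s +
          fMax (SimpleGraph.completeMultipartiteGraph (fun i : Fin r => Fin (n i))) (s + 2) := by
  intro s hs hs2
  set G := SimpleGraph.completeMultipartiteGraph (fun i : Fin r => Fin (n i)) with hG
  have hcard : Fintype.card ((i : Fin r) × Fin (n i)) = ∑ i ∈ Finset.range r, n i := by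
    rw [Fintype.card_sigma]
    simp only [Fintype.card_fin]
    exact Fin.sum_univ_eq_sum_range n r
  have h1 : ∀ (t : Finset ((i : Fin r) × Fin (n i))) (x : (i : Fin r) × Fin (n i)),
      (t.filter (G.Adj x)).card + (t.filter (fun w => w.1 = x.1)).card = t.card := by
    intro t x
    have h0 := Finset.card_filter_add_card_filter_not (s := t)
      (p := fun w => G.Adj x w)
    have heq : t.filter (fun w => ¬ G.Adj x w) = t.filter (fun w => w.1 = x.1) := by
      apply Finset.filter_congr
      intro w hw
      simp only [hG, SimpleGraph.comap_adj, SimpleGraph.top_adj, not_ne_iff]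
      exact eq_comm
    rw [heq] at h0
    exact h0
  refine keyAux G ?_ s hs ?_
  swap
  · rw [hcard]
    omega
  · intro t htne
    obtain ⟨v, hvt, hvmax⟩ := Finset.exists_max_image t
      (fun x => (t.filter (fun w => w.1 = x.1)).card) htne
    refine ⟨v, hvt, ?_⟩
    intro u
    have h2 : (t.filter (fun w => w.1 = u.1)).card ≤ (t.filter (fun w => w.1 = v.1)).card := by
      by_cases hne : (t.filter (fun w => w.1 = u.1)).Nonempty
      · obtain ⟨w, hw⟩ := hne
        obtain ⟨hwt, hwe⟩ := Finset.mem_filter.mp hw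
        have heq2 : t.filter (fun z => z.1 = u.1) = t.filter (fun z => z.1 = w.1) := by
          apply Finset.filter_congr
          intro z hz
          rw [hwe]
        rw [heq2]
        exact hvmax w hwt
      · rw [Finset.not_nonempty_iff_eq_empty.1 hne]
        exact Nat.zero_le _
    have h3 := h1 t u
    have h4 := h1 t v
    have hh : (t.filter (G.Adj v)).card ≤ (t.filter (G.Adj u)).card := by omega
    convert hh using 3 <;> exact Subsingleton.elim _ _
end

section
/- Let G be a finite complete multipartite graph and 2 ≤ s ≤ |V(G)|. Among all partitions of V(G) into exactly s nonempty parts, the maximum of |E(P,G)| is achieved by a partition P₀ obtained from the trivial partition {V(G)} by performing s-1 successive splitting steps, where each step removes a single vertex from a currently largest part (measured by the number of non-crossing edges it induces) to form a new singleton part. -/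
open Finset
open scoped Classical

section Aux

variable {V : Type} [Fintype V] (G : SimpleGraph V)

/-- degree of v into t -/
noncomputable def degIn (v : V) (t : Finset V) : ℕ := (t.filter (G.Adj v)).card

noncomputable def cutE (p q : Finset V) : ℕ := ∑ v ∈ p, degIn G v q

/-- the graph G restricted to p -/
def within (p : Finset V) : SimpleGraph V where
  Adj u v := G.Adj u v ∧ u ∈ p ∧ v ∈ p
  symm := by constructor; intro u v ⟨h, hu, hv⟩; exact ⟨h.symm, hv, hu⟩
  loopless := by constructor; intro v ⟨h, _⟩; exact G.ne_of_adj h rfl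

lemma within_edgeFinset (p : Finset V) :
    (within G p).edgeFinset = G.edgeFinset.filter (fun e => ∀ v ∈ e, v ∈ p) := by
  ext e
  induction e with
  | _ a b =>
    rw [SimpleGraph.mem_edgeFinset, SimpleGraph.mem_edgeSet]
    simp [within, and_assoc]

lemma edgesWithin_eq (p : Finset V) : edgesWithin G p = (within G p).edgeFinset.card := by
  rw [within_edgeFinset]; rfl

lemma handshake (p : Finset V) :
    ∑ v ∈ p, degIn G v p = 2 * edgesWithin G p := by
  rw [edgesWithin_eq, ← SimpleGraph.sum_degrees_eq_twice_card_edges]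
  rw [← Finset.sum_subset (Finset.subset_univ p)]
  · apply Finset.sum_congr rfl
    intro v hv
    unfold degIn
    rw [SimpleGraph.degree, SimpleGraph.neighborFinset_def]
    congr 1
    ext u
    simp [within, hv, and_comm]
  · intro v _ hv
    rw [SimpleGraph.degree, SimpleGraph.neighborFinset_def]
    convert Finset.card_empty
    ext u
    simp only [Set.mem_toFinset, SimpleGraph.mem_neighborSet]
    simp [within, hv]

lemma card_filter_prod {α β : Type*} (s : Finset α) (t : Finset β) (r : α → β → Prop) :
    ((s ×ˢ t).filter (fun z => r z.1 z.2)).card = ∑ a ∈ s, (t.filter (r a)).card := by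
  rw [Finset.card_filter, Finset.sum_product]
  exact Finset.sum_congr rfl fun a _ => (Finset.card_filter _ _).symm

lemma cutE_symm (p q : Finset V) : cutE G p q = cutE G q p := by
  unfold cutE degIn
  rw [← card_filter_prod, ← card_filter_prod]
  apply Finset.card_bij (fun z _ => (z.2, z.1))
  · intro z hz; simp only [Finset.mem_filter, Finset.mem_product] at *
    exact ⟨⟨hz.1.2, hz.1.1⟩, hz.2.symm⟩
  · intro a ha b hb hab
    simp only [Prod.mk.injEq] at hab
    exact Prod.ext hab.2 hab.1
  · intro z hz
    simp only [Finset.mem_filter, Finset.mem_product] at *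
    exact ⟨(z.2, z.1), ⟨⟨hz.1.2, hz.1.1⟩, hz.2.symm⟩, rfl⟩

lemma degIn_union {v : V} {p q : Finset V} (h : Disjoint p q) :
    degIn G v (p ∪ q) = degIn G v p + degIn G v q := by
  unfold degIn
  rw [Finset.filter_union, Finset.card_union_of_disjoint]
  exact Finset.disjoint_filter_filter h

lemma edgesWithin_union {p q : Finset V} (h : Disjoint p q) :
    edgesWithin G (p ∪ q) = edgesWithin G p + edgesWithin G q + cutE G p q := by
  have h2 : ∑ v ∈ p ∪ q, degIn G v (p ∪ q) = 2 * edgesWithin G (p ∪ q) := handshake G _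
  rw [Finset.sum_union h] at h2
  simp only [degIn_union G h] at h2
  rw [Finset.sum_add_distrib, Finset.sum_add_distrib, handshake, handshake] at h2
  have h3 : ∑ v ∈ q, degIn G v p = cutE G p q := (cutE_symm G q p).symm ▸ rfl
  have h4 : (∑ v ∈ p, degIn G v q) = cutE G p q := rfl
  omega

lemma edgesWithin_singleton (v : V) : edgesWithin G {v} = 0 := by
  have h := handshake G {v}
  simp only [Finset.sum_singleton, degIn, Finset.filter_singleton, SimpleGraph.irrefl,
    if_false] at h
  simp at h
  omega

lemma edgesWithin_erase {p : Finset V} {v : V} (hv : v ∈ p) :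
    edgesWithin G p = edgesWithin G (p.erase v) + degIn G v (p.erase v) := by
  have hu : p = p.erase v ∪ {v} := by
    rw [Finset.union_comm, ← Finset.insert_eq, Finset.insert_erase hv]
  have hd : Disjoint (p.erase v) {v} := by
    simp [Finset.disjoint_singleton_right]
  have hc : cutE G (p.erase v) {v} = degIn G v (p.erase v) := by
    unfold cutE degIn
    rw [Finset.card_filter]
    apply Finset.sum_congr rfl
    intro u hu
    rw [Finset.filter_singleton]
    by_cases h : G.Adj u v
    · rw [if_pos h, if_pos h.symm, Finset.card_singleton]
    · rw [if_neg h, if_neg (fun hh => h hh.symm), Finset.card_empty]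
  conv_lhs => rw [hu]
  rw [edgesWithin_union G hd, edgesWithin_singleton]
  omega

lemma lemA {ι : Type} {c : V → ι} (hf : ∀ u v, G.Adj u v ↔ c u ≠ c v)
    {p q : Finset V} (hdis : Disjoint p q) (hq : 2 ≤ q.card) :
    2 * edgesWithin G p ≤ cutE G p q * (p.card - 1) := by
  obtain ⟨w₀, hw₀, w₁, hw₁, hww⟩ := Finset.one_lt_card.mp hq
  have hdom : ((p ×ˢ p).filter (fun z => G.Adj z.1 z.2)).card = 2 * edgesWithin G p := by
    rw [card_filter_prod]
    exact handshake G p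
  set X := (p ×ˢ q).filter (fun z => G.Adj z.1 z.2) with hX
  have hXcard : X.card = cutE G p q := by
    rw [hX, card_filter_prod]
    rfl
  set C := X.biUnion (fun a => {a} ×ˢ (p.erase a.1)) with hC
  have hcod : C.card = cutE G p q * (p.card - 1) := by
    rw [hC, Finset.card_biUnion]
    · rw [Finset.sum_congr rfl (fun a (ha : a ∈ X) => ?_), Finset.sum_const, smul_eq_mul, hXcard]
      simp only [hX, Finset.mem_filter, Finset.mem_product] at ha
      rw [Finset.card_product, Finset.card_singleton, one_mul,
        Finset.card_erase_of_mem ha.1.1]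
    · intro a _ b _ hab
      simp only [Finset.disjoint_left, Finset.mem_product, Finset.mem_singleton]
      rintro z ⟨rfl, -⟩ ⟨rfl, -⟩
      exact hab rfl
  rw [← hdom, ← hcod]
  apply Finset.card_le_card_of_injOn
    (fun z => if c z.1 ≠ c w₀ then ((z.1, w₀), z.2)
      else if c z.1 ≠ c w₁ then ((z.1, w₁), z.2) else ((z.2, w₁), z.1))
  · intro z hz
    simp only [Finset.mem_coe, Finset.mem_filter, Finset.mem_product] at hz
    obtain ⟨⟨h1, h2⟩, hadj⟩ := hz
    have hne := hadj.ne
    have hcne : c z.1 ≠ c z.2 := (hf _ _).mp hadj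
    have hmem : ∀ x y u, x ∈ p → y ∈ q → G.Adj x y → u ∈ p → u ≠ x →
        ((x, y), u) ∈ C := by
      intro x y u hx hy hxy hu hux
      rw [hC]
      apply Finset.mem_biUnion.mpr
      refine ⟨(x, y), ?_, ?_⟩
      · rw [hX]; simp only [Finset.mem_filter, Finset.mem_product]; exact ⟨⟨hx, hy⟩, hxy⟩
      · simp only [Finset.mem_product, Finset.mem_singleton, Finset.mem_erase]
        exact ⟨by simp, hux, hu⟩
    simp only [Finset.mem_coe]
    split_ifs with b0 b1
    · exact hmem _ _ _ h1 hw₀ ((hf _ _).mpr b0) h2 hne.symm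
    · exact hmem _ _ _ h1 hw₁ ((hf _ _).mpr b1) h2 hne.symm
    · push_neg at b0 b1
      refine hmem _ _ _ h2 hw₁ ((hf _ _).mpr ?_) h1 hne
      rw [← b1]
      exact fun h => hcne h.symm
  · intro z hz z' hz' heq
    simp only [Finset.coe_filter, Set.mem_setOf_eq, Finset.mem_product] at hz hz'
    obtain ⟨⟨hz1, hz2⟩, hzadj⟩ := hz
    obtain ⟨⟨hz1', hz2'⟩, hzadj'⟩ := hz'
    have hc : c z.1 ≠ c z.2 := (hf _ _).mp hzadj
    have hc' : c z'.1 ≠ c z'.2 := (hf _ _).mp hzadj'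
    simp only [] at heq
    by_cases b0 : c z.1 ≠ c w₀ <;> by_cases b0' : c z'.1 ≠ c w₀
    · rw [if_pos b0, if_pos b0'] at heq
      simp only [Prod.mk.injEq] at heq
      exact Prod.ext heq.1.1 heq.2
    · rw [if_pos b0, if_neg b0'] at heq
      by_cases b1' : c z'.1 ≠ c w₁
      · rw [if_pos b1'] at heq
        simp only [Prod.mk.injEq] at heq
        exact absurd heq.1.2 hww
      · rw [if_neg b1'] at heq
        simp only [Prod.mk.injEq] at heq
        exact absurd heq.1.2 hww
    · rw [if_neg b0, if_pos b0'] at heq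
      by_cases b1 : c z.1 ≠ c w₁
      · rw [if_pos b1] at heq
        simp only [Prod.mk.injEq] at heq
        exact absurd heq.1.2.symm hww
      · rw [if_neg b1] at heq
        simp only [Prod.mk.injEq] at heq
        exact absurd heq.1.2.symm hww
    · rw [if_neg b0, if_neg b0'] at heq
      push_neg at b0 b0'
      by_cases b1 : c z.1 ≠ c w₁ <;> by_cases b1' : c z'.1 ≠ c w₁
      · rw [if_pos b1, if_pos b1'] at heq
        simp only [Prod.mk.injEq] at heq
        exact Prod.ext heq.1.1 heq.2
      · rw [if_pos b1, if_neg b1'] at heq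
        push_neg at b1'
        exact absurd (b0.trans (b0'.symm.trans b1')) b1
      · rw [if_neg b1, if_pos b1'] at heq
        push_neg at b1
        exact absurd (b0'.trans (b0.symm.trans b1)) b1'
      · rw [if_neg b1, if_neg b1'] at heq
        simp only [Prod.mk.injEq] at heq
        exact Prod.ext heq.2 heq.1.1

lemma keyLemma {ι : Type} {c : V → ι} (hf : ∀ u v, G.Adj u v ↔ c u ≠ c v)
    {p q : Finset V} (hdis : Disjoint p q) (hp : 2 ≤ p.card) (hq : 2 ≤ q.card) :
    ∃ v ∈ p ∪ q, edgesWithin G p + edgesWithin G q ≤ edgesWithin G ((p ∪ q).erase v) := by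
  have hA := edgesWithin_union G hdis
  have hAcard : (p ∪ q).card = p.card + q.card := Finset.card_union_of_disjoint hdis
  have hcut := cutE_symm G p q
  have h1 := lemA G hf hdis hq
  have h2 := lemA G hf hdis.symm hp
  rw [← hcut] at h2
  -- ∃ v ∈ p ∪ q, degIn v (p∪q) ≤ cutE p q
  have hex : ∃ v ∈ p ∪ q, degIn G v (p ∪ q) ≤ cutE G p q := by
    by_contra hcon
    push_neg at hcon
    have hsum : cutE G p q * (p ∪ q).card < ∑ v ∈ p ∪ q, degIn G v (p ∪ q) := by
      have hne : (p ∪ q).Nonempty := by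
        rw [← Finset.card_pos, hAcard]; omega
      calc cutE G p q * (p ∪ q).card = ∑ _v ∈ p ∪ q, cutE G p q := by
            rw [Finset.sum_const, smul_eq_mul, mul_comm]
        _ < _ := Finset.sum_lt_sum_of_nonempty hne hcon
    rw [handshake] at hsum
    have h3 : 2 * edgesWithin G (p ∪ q) = 2 * edgesWithin G p + 2 * edgesWithin G q
        + 2 * cutE G p q := by omega
    have hb : 2 * edgesWithin G (p ∪ q) ≤ cutE G p q * (p ∪ q).card := by
      rw [h3, hAcard]
      obtain ⟨a, ha⟩ : ∃ a, p.card = a + 1 := ⟨p.card - 1, by omega⟩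
      obtain ⟨b, hbb⟩ : ∃ b, q.card = b + 1 := ⟨q.card - 1, by omega⟩
      rw [ha] at h1 ⊢
      rw [hbb] at h2 ⊢
      simp only [Nat.add_sub_cancel] at h1 h2
      calc 2 * edgesWithin G p + 2 * edgesWithin G q + 2 * cutE G p q
          ≤ cutE G p q * a + cutE G p q * b + 2 * cutE G p q := by omega
        _ = cutE G p q * (a + 1 + (b + 1)) := by ring
    omega
  obtain ⟨v, hv, hdeg⟩ := hex
  refine ⟨v, hv, ?_⟩
  have he := edgesWithin_erase G hv
  have hmono : degIn G v ((p ∪ q).erase v) ≤ degIn G v (p ∪ q) :=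
    Finset.card_le_card (Finset.filter_subset_filter _ (Finset.erase_subset _ _))
  omega

lemma sumNC (P : Finpartition (Finset.univ : Finset V)) :
    (edgesNonCrossing G P).card = ∑ p ∈ P.parts, edgesWithin G p := by
  have hbi : edgesNonCrossing G P
      = P.parts.biUnion (fun p => G.edgeFinset.filter (fun e => ∀ v ∈ e, v ∈ p)) := by
    ext e
    simp only [edgesNonCrossing, Finset.mem_filter, Finset.mem_biUnion]
    tauto
  rw [hbi, Finset.card_biUnion]
  · rfl
  · intro x hx y hy hxy
    rw [Function.onFun, Finset.disjoint_left]
    intro e he he'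
    simp only [Finset.mem_filter] at he he'
    induction e with
    | _ a b =>
      have hax : a ∈ x := he.2 a (Sym2.mem_mk_left a b)
      have hay : a ∈ y := he'.2 a (Sym2.mem_mk_left a b)
      exact Finset.disjoint_left.mp (P.disjoint hx hy hxy) hax hay

noncomputable def partn (S : Finset V) (hS : (Finset.univ \ S).Nonempty) :
    Finpartition (Finset.univ : Finset V) where
  parts := insert (Finset.univ \ S) (S.image (fun v => {v}))
  supIndep := by
    rw [Finset.supIndep_iff_pairwiseDisjoint]
    intro x hx y hy hxy
    simp only [Finset.coe_insert, Set.mem_insert_iff, Finset.mem_coe, Finset.mem_image] at hx hy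
    simp only [Function.onFun, id_eq]
    rcases hx with rfl | ⟨a, ha, rfl⟩ <;> rcases hy with rfl | ⟨b, hb, rfl⟩
    · exact absurd rfl hxy
    · simp only [Finset.disjoint_singleton_right, Finset.mem_sdiff]
      tauto
    · simp only [Finset.disjoint_singleton_left, Finset.mem_sdiff]
      tauto
    · simp only [Finset.disjoint_singleton_left, Finset.mem_singleton]
      intro h
      exact hxy (by rw [h])
  sup_parts := by
    apply Finset.Subset.antisymm
    · intro a ha
      exact Finset.mem_univ a
    · intro a _
      rw [Finset.mem_sup]
      by_cases h : a ∈ S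
      · exact ⟨{a}, Finset.mem_insert_of_mem (Finset.mem_image_of_mem _ h), Finset.mem_singleton_self a⟩
      · exact ⟨Finset.univ \ S, Finset.mem_insert_self _ _, Finset.mem_sdiff.mpr ⟨Finset.mem_univ a, h⟩⟩
  bot_notMem := by
    simp only [Finset.bot_eq_empty, Finset.mem_insert, Finset.mem_image]
    push_neg
    constructor
    · intro h
      rw [← h] at hS
      exact Finset.not_nonempty_empty hS
    · intro a _
      exact Finset.singleton_nonempty a

lemma partn_big_not_mem (S : Finset V) (hS : (Finset.univ \ S).Nonempty) :
    Finset.univ \ S ∉ S.image (fun v => ({v} : Finset V)) := by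
  intro h
  obtain ⟨a, haS, ha⟩ := Finset.mem_image.mp h
  have : a ∈ Finset.univ \ S := by rw [← ha]; exact Finset.mem_singleton_self a
  rw [Finset.mem_sdiff] at this
  exact this.2 haS

lemma partn_parts_card (S : Finset V) (hS : (Finset.univ \ S).Nonempty) :
    (partn S hS).parts.card = S.card + 1 := by
  show (insert (Finset.univ \ S) (S.image (fun v => ({v} : Finset V)))).card = S.card + 1
  rw [Finset.card_insert_of_notMem (partn_big_not_mem S hS),
    Finset.card_image_of_injective _ (fun a b h => Finset.singleton_injective h)]

lemma partn_reach [Nonempty V] (S : Finset V) :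
    ∀ hS : (Finset.univ \ S).Nonempty,
    Relation.ReflTransGen (SplitStep G)
      (Finpartition.indiscrete (Finset.univ_nonempty.ne_empty)) (partn S hS) := by
  induction S using Finset.induction_on with
  | empty =>
    intro hS
    have : partn ∅ hS = Finpartition.indiscrete (Finset.univ_nonempty.ne_empty) := by
      ext x
      simp [partn, Finpartition.indiscrete]
    rw [this]
  | @insert a S ha ih =>
    intro hS
    have hS' : (Finset.univ \ S).Nonempty := by
      apply Finset.Nonempty.mono _ hS
      exact Finset.sdiff_subset_sdiff (le_refl _) (Finset.subset_insert a S)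
    refine Relation.ReflTransGen.tail (ih hS') ?_
    refine ⟨Finset.univ \ S, Finset.mem_insert_self _ _, ?_, a, ?_, ?_, ?_⟩
    · intro q hq
      rcases Finset.mem_insert.mp hq with rfl | hq'
      · exact le_refl _
      · obtain ⟨b, _, rfl⟩ := Finset.mem_image.mp hq'
        rw [edgesWithin_singleton]
        exact Nat.zero_le _
    · rw [Finset.mem_sdiff]
      exact ⟨Finset.mem_univ a, ha⟩
    · rw [← Finset.sdiff_insert]
      intro h
      rw [h] at hS
      exact Finset.not_nonempty_empty hS
    · show insert (Finset.univ \ insert a S) ((insert a S).image (fun v => ({v} : Finset V)))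
        = insert {a} (insert ((Finset.univ \ S).erase a)
          ((insert (Finset.univ \ S) (S.image (fun v => ({v} : Finset V)))).erase (Finset.univ \ S)))
      rw [Finset.erase_insert (partn_big_not_mem S hS'), Finset.image_insert,
        ← Finset.sdiff_insert]
      rw [Finset.insert_comm]

lemma shape_convert [Nonempty V] (P : Finpartition (Finset.univ : Finset V))
    (h1 : (P.parts.filter fun p => 2 ≤ p.card).card ≤ 1) :
    ∃ (S : Finset V) (hS : (Finset.univ \ S).Nonempty), (partn S hS).parts = P.parts := by
  have hpne : ∀ x ∈ P.parts, x.Nonempty := fun x hx =>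
    Finset.nonempty_of_ne_empty (P.ne_bot hx)
  by_cases hE : ∃ r ∈ P.parts, 2 ≤ r.card
  · obtain ⟨r, hr, hr2⟩ := hE
    have huniq : ∀ x ∈ P.parts, 2 ≤ x.card → x = r := by
      intro x hx hx2
      exact Finset.card_le_one.mp h1 x (Finset.mem_filter.mpr ⟨hx, hx2⟩)
        r (Finset.mem_filter.mpr ⟨hr, hr2⟩)
    have hrs : Finset.univ \ (Finset.univ \ r) = r := by
      ext x; simp
    refine ⟨Finset.univ \ r, by rw [hrs]; exact hpne r hr, ?_⟩
    show insert (Finset.univ \ (Finset.univ \ r)) ((Finset.univ \ r).image (fun v => {v}))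
      = P.parts
    rw [hrs]
    ext x
    simp only [Finset.mem_insert, Finset.mem_image]
    constructor
    · rintro (rfl | ⟨v, hv, rfl⟩)
      · exact hr
      · rw [Finset.mem_sdiff] at hv
        obtain ⟨t, ht, hvt⟩ := P.exists_mem (Finset.mem_univ v)
        have htr : t ≠ r := fun h => hv.2 (h ▸ hvt)
        have ht1 : t.card ≤ 1 := by
          by_contra hh
          exact htr (huniq t ht (by omega))
        obtain ⟨w, hw⟩ := Finset.card_eq_one.mp
          (le_antisymm ht1 (Finset.card_pos.mpr (hpne t ht)))
        rw [hw] at hvt ht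
        rw [Finset.mem_singleton] at hvt
        rw [← hvt] at ht
        exact ht
    · intro hx
      by_cases hxr : x = r
      · exact Or.inl hxr
      · right
        have hx1 : x.card ≤ 1 := by
          by_contra hh
          exact hxr (huniq x hx (by omega))
        obtain ⟨v, rfl⟩ := Finset.card_eq_one.mp
          (le_antisymm hx1 (Finset.card_pos.mpr (hpne x hx)))
        refine ⟨v, ?_, rfl⟩
        rw [Finset.mem_sdiff]
        refine ⟨Finset.mem_univ v, fun hvr => ?_⟩
        have := P.disjoint hx hr hxr
        exact Finset.disjoint_left.mp this (Finset.mem_singleton_self v) hvr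
  · push_neg at hE
    obtain ⟨v₀⟩ := ‹Nonempty V›
    have hsd : Finset.univ \ (Finset.univ.erase v₀) = {v₀} := by
      ext x
      simp only [Finset.mem_sdiff, Finset.mem_univ, true_and, Finset.mem_erase,
        Finset.mem_singleton]
      tauto
    refine ⟨Finset.univ.erase v₀, by rw [hsd]; exact Finset.singleton_nonempty v₀, ?_⟩
    show insert (Finset.univ \ Finset.univ.erase v₀)
      ((Finset.univ.erase v₀).image (fun v => {v})) = P.parts
    rw [hsd]
    have hsing : ∀ w : V, ({w} : Finset V) ∈ P.parts := by
      intro w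
      obtain ⟨t, ht, hwt⟩ := P.exists_mem (Finset.mem_univ w)
      have ht1 : t.card ≤ 1 := by
        have := hE t ht
        omega
      obtain ⟨u, hu⟩ := Finset.card_eq_one.mp
        (le_antisymm ht1 (Finset.card_pos.mpr (hpne t ht)))
      rw [hu] at hwt ht
      rw [Finset.mem_singleton] at hwt
      rw [← hwt] at ht
      exact ht
    ext x
    simp only [Finset.mem_insert, Finset.mem_image, Finset.mem_erase]
    constructor
    · rintro (rfl | ⟨v, _, rfl⟩)
      · exact hsing v₀
      · exact hsing v
    · intro hx
      have hx1 : x.card ≤ 1 := by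
        have := hE x hx
        omega
      obtain ⟨v, rfl⟩ := Finset.card_eq_one.mp
        (le_antisymm hx1 (Finset.card_pos.mpr (hpne x hx)))
      by_cases hv : v = v₀
      · exact Or.inl (by rw [hv])
      · exact Or.inr ⟨v, ⟨hv, Finset.mem_univ v⟩, rfl⟩

lemma merge_step {ι : Type} {c : V → ι} (hf : ∀ u v, G.Adj u v ↔ c u ≠ c v)
    (P : Finpartition (Finset.univ : Finset V))
    {p q : Finset V} (hp : p ∈ P.parts) (hq : q ∈ P.parts) (hpq : p ≠ q)
    (hp2 : 2 ≤ p.card) (hq2 : 2 ≤ q.card) :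
    ∃ P' : Finpartition (Finset.univ : Finset V),
      P'.parts.card = P.parts.card ∧
      (P'.parts.filter fun x => 2 ≤ x.card).card + 1
        = (P.parts.filter fun x => 2 ≤ x.card).card ∧
      ∑ x ∈ P.parts, edgesWithin G x ≤ ∑ x ∈ P'.parts, edgesWithin G x := by
  have hdis : Disjoint p q := P.disjoint hp hq hpq
  obtain ⟨v, hvA, hkey⟩ := keyLemma G hf hdis hp2 hq2
  set A := p ∪ q with hA
  set rest := (P.parts.erase p).erase q with hrest
  have hqrest : q ∈ P.parts.erase p := Finset.mem_erase.mpr ⟨fun h => hpq h.symm, hq⟩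
  have hparts : P.parts = insert p (insert q rest) := by
    rw [hrest, Finset.insert_erase hqrest, Finset.insert_erase hp]
  have hAcard : A.card = p.card + q.card := Finset.card_union_of_disjoint hdis
  have hAecard : (A.erase v).card = A.card - 1 := Finset.card_erase_of_mem hvA
  have hrest_sub : rest ⊆ P.parts := fun x hx =>
    Finset.mem_of_mem_erase (Finset.mem_of_mem_erase hx)
  have hrest_dis : ∀ x ∈ rest, Disjoint x A := by
    intro x hx
    rw [hA, Finset.disjoint_union_right]
    have hxp : x ≠ p := fun h => (Finset.mem_erase.mp (Finset.mem_of_mem_erase hx)).1 (by rw [h])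
    have hxq : x ≠ q := fun h => (Finset.mem_erase.mp hx).1 (by rw [h])
    exact ⟨P.disjoint (hrest_sub hx) hp hxp, P.disjoint (hrest_sub hx) hq hxq⟩
  have hsv_ne : ({v} : Finset V) ≠ A.erase v := by
    intro h
    have : v ∈ A.erase v := h ▸ Finset.mem_singleton_self v
    exact Finset.notMem_erase v A this
  have hsv_rest : ({v} : Finset V) ∉ rest := by
    intro h
    exact Finset.disjoint_left.mp (hrest_dis _ h) (Finset.mem_singleton_self v) hvA
  have hAe_rest : A.erase v ∉ rest := by
    intro h
    have h3 : 1 ≤ (A.erase v).card := by omega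
    obtain ⟨w, hw⟩ := Finset.card_pos.mp h3
    exact Finset.disjoint_left.mp (hrest_dis _ h) hw (Finset.mem_of_mem_erase hw)
  have hAe_ne : A.erase v ≠ (∅ : Finset V) := by
    intro h
    have := Finset.card_eq_zero.mpr h
    omega
  refine ⟨⟨insert {v} (insert (A.erase v) rest), ?_, ?_, ?_⟩, ?_, ?_, ?_⟩
  · rw [Finset.supIndep_iff_pairwiseDisjoint]
    intro x hx y hy hxy
    simp only [Finset.coe_insert, Set.mem_insert_iff, Finset.mem_coe] at hx hy
    simp only [Function.onFun, id_eq]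
    rcases hx with rfl | rfl | hx <;> rcases hy with rfl | rfl | hy
    · exact absurd rfl hxy
    · rw [Finset.disjoint_singleton_left]
      exact Finset.notMem_erase v A
    · rw [Finset.disjoint_singleton_left]
      exact fun h => Finset.disjoint_left.mp (hrest_dis _ hy) h hvA
    · rw [Finset.disjoint_singleton_right]
      exact Finset.notMem_erase v A
    · exact absurd rfl hxy
    · exact Disjoint.mono_left (Finset.erase_subset v A) (hrest_dis _ hy).symm
    · rw [Finset.disjoint_singleton_right]
      exact fun h => Finset.disjoint_left.mp (hrest_dis _ hx) h hvA
    · exact Disjoint.mono_right (Finset.erase_subset v A) (hrest_dis _ hx)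
    · exact P.disjoint (hrest_sub hx) (hrest_sub hy) hxy
  · have h1 : ({v} : Finset V) ⊔ (A.erase v) = A := by
      rw [Finset.sup_eq_union, ← Finset.insert_eq, Finset.insert_erase hvA]
    calc (insert {v} (insert (A.erase v) rest)).sup id
        = ({v} : Finset V) ⊔ ((A.erase v) ⊔ rest.sup id) := by
          rw [Finset.sup_insert, Finset.sup_insert]; rfl
      _ = A ⊔ rest.sup id := by rw [← sup_assoc, h1]
      _ = p ⊔ (q ⊔ rest.sup id) := by
          rw [hA, show (p ∪ q) = p ⊔ q from rfl, sup_assoc]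
      _ = (insert p (insert q rest)).sup id := by rw [Finset.sup_insert, Finset.sup_insert]; rfl
      _ = Finset.univ := by rw [← hparts]; exact P.sup_parts
  · simp only [Finset.bot_eq_empty, Finset.mem_insert]
    push_neg
    refine ⟨fun h => Finset.singleton_ne_empty v h.symm, fun h => hAe_ne h.symm, ?_⟩
    intro h
    exact P.bot_notMem (hrest_sub h)
  · show (insert {v} (insert (A.erase v) rest)).card = P.parts.card
    rw [Finset.card_insert_of_notMem, Finset.card_insert_of_notMem hAe_rest, hparts,
      Finset.card_insert_of_notMem, Finset.card_insert_of_notMem]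
    · exact fun h => (Finset.mem_erase.mp h).1 rfl
    · intro h
      rcases Finset.mem_insert.mp h with h' | h'
      · exact hpq h'
      · exact (Finset.mem_erase.mp (Finset.mem_of_mem_erase h')).1 rfl
    · intro h
      rcases Finset.mem_insert.mp h with h' | h'
      · exact hsv_ne h'
      · exact hsv_rest h'
  · show ((insert {v} (insert (A.erase v) rest)).filter fun x => 2 ≤ x.card).card + 1
      = (P.parts.filter fun x => 2 ≤ x.card).card
    rw [Finset.filter_insert, if_neg (by simp), Finset.filter_insert,
      if_pos (by omega : 2 ≤ (A.erase v).card)]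
    rw [Finset.card_insert_of_notMem (fun h => hAe_rest (Finset.mem_of_mem_filter _ h))]
    have hpf : p ∈ (P.parts.filter fun x => 2 ≤ x.card) := Finset.mem_filter.mpr ⟨hp, hp2⟩
    have hqf : q ∈ (P.parts.filter fun x => 2 ≤ x.card).erase p :=
      Finset.mem_erase.mpr ⟨fun h => hpq h.symm, Finset.mem_filter.mpr ⟨hq, hq2⟩⟩
    rw [hrest, Finset.filter_erase, Finset.filter_erase, Finset.card_erase_of_mem hqf,
      Finset.card_erase_of_mem hpf]
    have h2 : 2 ≤ (P.parts.filter fun x => 2 ≤ x.card).card := by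
      apply Finset.one_lt_card.mpr
      exact ⟨p, Finset.mem_filter.mpr ⟨hp, hp2⟩, q, Finset.mem_filter.mpr ⟨hq, hq2⟩, hpq⟩
    omega
  · show ∑ x ∈ P.parts, edgesWithin G x
      ≤ ∑ x ∈ insert {v} (insert (A.erase v) rest), edgesWithin G x
    rw [Finset.sum_insert, Finset.sum_insert hAe_rest, edgesWithin_singleton, zero_add]
    · conv_lhs => rw [hparts]
      rw [Finset.sum_insert, Finset.sum_insert]
      · have := hkey
        omega
      · exact fun h => (Finset.mem_erase.mp h).1 rfl
      · intro h
        rcases Finset.mem_insert.mp h with h' | h'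
        · exact hpq h'
        · exact (Finset.mem_erase.mp (Finset.mem_of_mem_erase h')).1 rfl
    · intro h
      rcases Finset.mem_insert.mp h with h' | h'
      · exact hsv_ne h'
      · exact hsv_rest h'

lemma optimal_shape [Nonempty V] {ι : Type} {c : V → ι} (hf : ∀ u v, G.Adj u v ↔ c u ≠ c v) :
    ∀ k : ℕ, ∀ P : Finpartition (Finset.univ : Finset V),
      (P.parts.filter fun x => 2 ≤ x.card).card ≤ k →
      ∃ (S : Finset V) (hS : (Finset.univ \ S).Nonempty),
        (partn S hS).parts.card = P.parts.card ∧
        ∑ x ∈ P.parts, edgesWithin G x ≤ ∑ x ∈ (partn S hS).parts, edgesWithin G x := by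
  intro k
  induction k with
  | zero =>
    intro P hP
    obtain ⟨S, hS, hSparts⟩ := shape_convert P (le_trans hP (by omega))
    exact ⟨S, hS, by rw [hSparts], by rw [hSparts]⟩
  | succ k ih =>
    intro P hP
    by_cases h1 : (P.parts.filter fun x => 2 ≤ x.card).card ≤ 1
    · obtain ⟨S, hS, hSparts⟩ := shape_convert P h1
      exact ⟨S, hS, by rw [hSparts], by rw [hSparts]⟩
    · push_neg at h1
      obtain ⟨p, hpf, q, hqf, hpq⟩ := Finset.one_lt_card.mp h1
      rw [Finset.mem_filter] at hpf hqf
      obtain ⟨P', hcard, hfilt, hsum⟩ :=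
        merge_step G hf P hpf.1 hqf.1 hpq hpf.2 hqf.2
      obtain ⟨S, hS, hSc, hSsum⟩ := ih P' (by omega)
      exact ⟨S, hS, by rw [hSc, hcard], le_trans hsum hSsum⟩


end Aux

/-- For a finite complete multipartite graph `G` and
`2 ≤ s ≤ |V(G)|`, the maximum of `|E(P,G)|` over partitions of `V(G)` into
exactly `s` parts is achieved by a partition `P₀` obtained from the trivial
partition `{V(G)}` by `s - 1` successive splitting steps, each removing one
vertex from a currently largest part (measured by the number of non-crossing
edges it induces) to form a new singleton part. (Since each splitting step
increases the number of parts by one, reaching `s` parts from the trivial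
partition takes exactly `s - 1` steps.) -/
theorem stmt17 {V : Type} [Fintype V] [Nonempty V] (G : SimpleGraph V)
    (hG : ∃ (ι : Type) (f : V → ι), ∀ u v, G.Adj u v ↔ f u ≠ f v)
    (s : ℕ) (hs2 : 2 ≤ s) (hsn : s ≤ Fintype.card V) :
    ∃ P₀ : Finpartition (Finset.univ : Finset V),
      Relation.ReflTransGen (SplitStep G)
        (Finpartition.indiscrete (Finset.univ_nonempty.ne_empty)) P₀ ∧
      P₀.parts.card = s ∧
      ∀ P : Finpartition (Finset.univ : Finset V), P.parts.card = s →
        (edgesNonCrossing G P).card ≤ (edgesNonCrossing G P₀).card := by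
  obtain ⟨ι, c, hf⟩ := hG
  have hcardV : (Finset.univ : Finset V).card = Fintype.card V := Finset.card_univ
  obtain ⟨S₁, hS₁sub, hS₁card⟩ := Finset.exists_subset_card_eq (s := (Finset.univ : Finset V)) (n := s - 1)
    (by omega)
  have hS₁ : (Finset.univ \ S₁).Nonempty := by
    rw [← Finset.card_pos, Finset.card_sdiff_of_subset hS₁sub]
    omega
  set T := {m | ∃ P : Finpartition (Finset.univ : Finset V),
    P.parts.card = s ∧ m = (edgesNonCrossing G P).card} with hT
  have hTne : T.Nonempty := by
    refine ⟨(edgesNonCrossing G (partn S₁ hS₁)).card, partn S₁ hS₁, ?_, rfl⟩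
    rw [partn_parts_card]
    omega
  have hTbdd : BddAbove T := by
    refine ⟨G.edgeFinset.card, ?_⟩
    rintro m ⟨P, _, rfl⟩
    exact Finset.card_filter_le _ _
  obtain ⟨Pm, hPmcard, hPmval⟩ := Nat.sSup_mem hTne hTbdd
  obtain ⟨S, hS, hScard, hSsum⟩ := optimal_shape G hf
    ((Pm.parts.filter fun x => 2 ≤ x.card).card) Pm (le_refl _)
  refine ⟨partn S hS, partn_reach G S hS, by rw [hScard, hPmcard], ?_⟩
  intro P hP
  have h1 : (edgesNonCrossing G P).card ≤ sSup T := le_csSup hTbdd ⟨P, hP, rfl⟩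
  rw [hPmval] at h1
  rw [sumNC, sumNC] at *
  exact le_trans h1 hSsum
end
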